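/- arXiv:0808.0058 — 8 statements merged into one kernel-verified Lean document; each statement's English description precedes it below -/
import Mathlib

section
/- Let R be a commutative noetherian ring. Then every coherent subcategory of the category of finitely generated R-modules is a Serre subcategory; that is, if P is an isomorphism-invariant predicate on finitely generated R-modules that is closed under kernels, cokernels and extensions, then P is also closed under submodules (and hence under quotient modules). -/
universe u
open Submodule LinearMap

set_option linter.unusedSectionVars false
set_option maxHeartbeats 1000000

namespace CoherentSerre

variable {R : Type u} [CommRing R] [IsNoetherianRing R]

/-- Bundle of the closure hypotheses: a coherent ("wide") subcategory. -/
structure Wide (R : Type u) [CommRing R]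
    (P : ∀ (M : Type u) [AddCommGroup M] [Module R M], Prop) : Prop where
  iso : ∀ (M N : Type u) [AddCommGroup M] [Module R M] [AddCommGroup N] [Module R N]
      [Module.Finite R M] [Module.Finite R N], (M ≃ₗ[R] N) → P M → P N
  ker : ∀ (M N : Type u) [AddCommGroup M] [Module R M] [AddCommGroup N] [Module R N]
      [Module.Finite R M] [Module.Finite R N] (f : M →ₗ[R] N),
      P M → P N → P (LinearMap.ker f)
  coker : ∀ (M N : Type u) [AddCommGroup M] [Module R M] [AddCommGroup N] [Module R N]
      [Module.Finite R M] [Module.Finite R N] (f : M →ₗ[R] N),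
      P M → P N → P (N ⧸ LinearMap.range f)
  ext : ∀ (A B C : Type u) [AddCommGroup A] [Module R A] [AddCommGroup B] [Module R B]
      [AddCommGroup C] [Module R C] [Module.Finite R A] [Module.Finite R B]
      [Module.Finite R C] (f : A →ₗ[R] B) (g : B →ₗ[R] C),
      Function.Injective f → Function.Surjective g → LinearMap.range f = LinearMap.ker g →
      P A → P C → P B

variable {P : ∀ (M : Type u) [AddCommGroup M] [Module R M], Prop}

theorem finite_submodule {M : Type u} [AddCommGroup M] [Module R M] [Module.Finite R M]
    (N : Submodule R M) : Module.Finite R N :=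
  Module.Finite.iff_fg.mpr (IsNoetherian.noetherian N)

theorem finite_quotient {M : Type u} [AddCommGroup M] [Module R M] [Module.Finite R M]
    (N : Submodule R M) : Module.Finite R (M ⧸ N) :=
  Module.Finite.of_surjective N.mkQ (Submodule.mkQ_surjective N)

/-- closure under images -/
theorem Wide.range (hP : Wide R P) {M N : Type u}
    [AddCommGroup M] [Module R M] [AddCommGroup N] [Module R N]
    [Module.Finite R M] [Module.Finite R N] (f : M →ₗ[R] N)
    (hM : P M) (hN : P N) : P (LinearMap.range f) := by
  haveI := finite_quotient (LinearMap.range f)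
  haveI := finite_submodule (LinearMap.ker (LinearMap.range f).mkQ)
  haveI := finite_submodule (LinearMap.range f)
  have h1 : P ((N ⧸ LinearMap.range f)) := hP.coker M N f hM hN
  have h2 := hP.ker N (N ⧸ LinearMap.range f) (LinearMap.range f).mkQ hN h1
  exact hP.iso _ _ (LinearEquiv.ofEq _ _ (Submodule.ker_mkQ (LinearMap.range f))) h2

theorem subquot_exact {M : Type u} [AddCommGroup M] [Module R M]
    (A B : Submodule R M) (hBA : B ≤ A) :
    ∃ (f : (A ⧸ (B.comap A.subtype)) →ₗ[R] (M ⧸ B)) (g : (M ⧸ B) →ₗ[R] (M ⧸ A)),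
      Function.Injective f ∧ Function.Surjective g ∧ LinearMap.range f = LinearMap.ker g := by
  refine ⟨Submodule.mapQ _ _ A.subtype (le_refl _),
    Submodule.mapQ B A LinearMap.id (by simpa using hBA), ?_, ?_, ?_⟩
  · rw [← LinearMap.ker_eq_bot, eq_bot_iff]
    intro y hy
    obtain ⟨a, rfl⟩ := Submodule.Quotient.mk_surjective _ y
    rw [LinearMap.mem_ker, Submodule.mapQ_apply, Submodule.Quotient.mk_eq_zero] at hy
    simpa [Submodule.Quotient.mk_eq_zero] using hy
  · intro z
    obtain ⟨m, rfl⟩ := Submodule.Quotient.mk_surjective _ z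
    exact ⟨Submodule.Quotient.mk m, by rw [Submodule.mapQ_apply]; rfl⟩
  · ext y
    constructor
    · rintro ⟨a, rfl⟩
      obtain ⟨a, rfl⟩ := Submodule.Quotient.mk_surjective _ a
      rw [LinearMap.mem_ker, Submodule.mapQ_apply, Submodule.mapQ_apply,
        Submodule.Quotient.mk_eq_zero]
      exact a.2
    · intro hy
      obtain ⟨m, rfl⟩ := Submodule.Quotient.mk_surjective _ y
      rw [LinearMap.mem_ker, Submodule.mapQ_apply, Submodule.Quotient.mk_eq_zero] at hy
      exact ⟨Submodule.Quotient.mk ⟨m, hy⟩, by rw [Submodule.mapQ_apply]; rfl⟩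

/-- If `B ≤ A ≤ M`, `P (A/B)` and `P (M/A)` then `P (M/B)`. -/
theorem Wide.subquot (hP : Wide R P) {M : Type u} [AddCommGroup M] [Module R M]
    [Module.Finite R M] (A B : Submodule R M) (hBA : B ≤ A)
    (h1 : P (A ⧸ (B.comap A.subtype))) (h2 : P (M ⧸ A)) : P (M ⧸ B) := by
  haveI := finite_submodule A
  haveI := finite_quotient (B.comap A.subtype)
  haveI := finite_quotient A
  haveI := finite_quotient B
  obtain ⟨f, g, hf, hg, hfg⟩ := subquot_exact A B hBA
  exact hP.ext _ _ _ f g hf hg hfg h1 h2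

/-- closure under finite powers -/
theorem Wide.pi (hP : Wide R P) {M : Type u} [AddCommGroup M] [Module R M] [Module.Finite R M]
    (hM : P M) : ∀ n : ℕ, P (Fin n → M) := by
  intro n
  induction n with
  | zero =>
    haveI := finite_submodule (LinearMap.ker (LinearMap.id : M →ₗ[R] M))
    have h0 : P (LinearMap.ker (LinearMap.id : M →ₗ[R] M)) := hP.ker M M LinearMap.id hM hM
    haveI : Subsingleton (LinearMap.ker (LinearMap.id : M →ₗ[R] M)) := by
      rw [LinearMap.ker_id]; infer_instance
    exact hP.iso _ _
      { toFun := 0, invFun := 0,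
        map_add' := by intros; simp,
        map_smul' := by intros; simp,
        left_inv := fun a => Subsingleton.elim _ _,
        right_inv := fun a => Subsingleton.elim _ _ } h0
  | succ n ih =>
    classical
    set f : M →ₗ[R] (Fin (n + 1) → M) := LinearMap.single R (fun _ => M) 0 with hfdef
    set g : (Fin (n + 1) → M) →ₗ[R] (Fin n → M) :=
      LinearMap.funLeft R M Fin.succ with hgdef
    have hf : Function.Injective f := by
      rw [← LinearMap.ker_eq_bot]; exact LinearMap.ker_single R _ 0
    have hg : Function.Surjective g :=
      LinearMap.funLeft_surjective_of_injective R M _ (Fin.succ_injective n)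
    have hfg : LinearMap.range f = LinearMap.ker g := by
      ext v
      constructor
      · rintro ⟨m, rfl⟩
        rw [LinearMap.mem_ker]
        funext i
        show (Pi.single (M := fun _ => M) (0 : Fin (n + 1)) m) (Fin.succ i) = 0
        exact Pi.single_eq_of_ne (M := fun _ => M) (Fin.succ_ne_zero i) m
      · intro hv
        rw [LinearMap.mem_ker] at hv
        refine ⟨v 0, funext fun j => ?_⟩
        show (Pi.single (M := fun _ => M) (0 : Fin (n + 1)) (v 0)) j = v j
        refine Fin.cases ?_ (fun i => ?_) j
        · exact Pi.single_eq_same (M := fun _ => M) 0 (v 0)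
        · have hvi : v (Fin.succ i) = 0 := congrFun hv i
          rw [hvi]
          exact Pi.single_eq_of_ne (M := fun _ => M) (Fin.succ_ne_zero i) (v 0)
    exact hP.ext M (Fin (n + 1) → M) (Fin n → M) f g hf hg hfg hM ih

theorem exists_torsion_bound {M : Type u} [AddCommGroup M] [Module R M] [Module.Finite R M]
    (p : Ideal R) (hp : p.IsPrime) :
    ∃ s : R, s ∉ p ∧ ∀ (t : R), t ∉ p → ∀ m : M, t • m = 0 → s • m = 0 := by
  haveI : IsNoetherian R M := isNoetherian_of_isNoetherianRing_of_finite R M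
  set S : Set (Submodule R M) :=
    {K | ∃ s : R, s ∉ p ∧ K = LinearMap.ker (s • (LinearMap.id : M →ₗ[R] M))} with hS
  have hne : S.Nonempty := ⟨_, 1, hp.ne_top ∘ (Ideal.eq_top_of_isUnit_mem p · isUnit_one), rfl⟩
  obtain ⟨K, hKS, hKmax⟩ := (set_has_maximal_iff_noetherian.mpr ‹_›) S hne
  obtain ⟨s, hs, rfl⟩ := hKS
  refine ⟨s, hs, fun t ht m hm => ?_⟩
  have hst : s * t ∉ p := fun h => ((hp.mem_or_mem h).elim hs ht)
  have hle : LinearMap.ker (s • (LinearMap.id : M →ₗ[R] M)) ≤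
      LinearMap.ker ((s * t) • (LinearMap.id : M →ₗ[R] M)) := by
    intro y hy
    simp only [LinearMap.mem_ker, LinearMap.smul_apply, LinearMap.id_coe, id_eq] at *
    rw [mul_comm, mul_smul, hy, smul_zero]
  have heq : LinearMap.ker ((s * t) • (LinearMap.id : M →ₗ[R] M)) =
      LinearMap.ker (s • (LinearMap.id : M →ₗ[R] M)) := by
    by_contra hne'
    exact hKmax _ ⟨s * t, hst, rfl⟩ (lt_of_le_of_ne hle (Ne.symm hne'))
  have : m ∈ LinearMap.ker ((s * t) • (LinearMap.id : M →ₗ[R] M)) := by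
    simp only [LinearMap.mem_ker, LinearMap.smul_apply, LinearMap.id_coe, id_eq]
    rw [mul_smul, hm, smul_zero]
  rw [heq] at this
  simpa using this

theorem exists_functional {D : Type u} [CommRing D] [IsDomain D]
    {M : Type u} [AddCommGroup M] [Module D M] [Module.Finite D M]
    [NoZeroSMulDivisors D M] {x : M} (hx : x ≠ 0) :
    ∃ (ψ : M →ₗ[D] M) (t : D), t ≠ 0 ∧ LinearMap.range ψ ≤ (D ∙ x) ∧
      t • x ∈ LinearMap.range ψ := by
  classical
  obtain ⟨n, v, hv⟩ := Module.Finite.exists_fin (R := D) (M := M)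
  obtain ⟨I, hI, hmax⟩ := exists_maximal_linearIndepOn D v
  set F : Submodule D M := span D (Set.range fun i : I => v ↑i) with hF
  have hFI : span D (v '' I) = F := by rw [hF, ← Set.image_eq_range]
  let b : Module.Basis I D F := Module.Basis.span hI
  have hch : ∀ i : Fin n, ∃ a : D, a ≠ 0 ∧ a • v i ∈ F := by
    intro i
    by_cases hi : i ∈ I
    · exact ⟨1, one_ne_zero, by rw [one_smul]; exact subset_span ⟨⟨i, hi⟩, rfl⟩⟩
    · obtain ⟨a, ha, haF⟩ := hmax i hi
      exact ⟨a, ha, hFI ▸ haF⟩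
  choose a ha haF using hch
  set t' : D := ∏ i : Fin n, a i with ht'
  have ht'0 : t' ≠ 0 := Finset.prod_ne_zero_iff.mpr fun i _ => ha i
  have hT : ∀ m : M, t' • m ∈ F := by
    intro m
    have hm : m ∈ span D (Set.range v) := hv ▸ mem_top
    refine span_induction ?_ ?_ ?_ ?_ hm
    · rintro _ ⟨i, rfl⟩
      rw [ht', ← Finset.mul_prod_erase _ _ (Finset.mem_univ i), mul_comm, mul_smul]
      exact F.smul_mem _ (haF i)
    · rw [smul_zero]; exact F.zero_mem
    · intro y z _ _ hy hz
      rw [smul_add]; exact F.add_mem hy hz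
    · intro c y _ hy
      rw [smul_comm]; exact F.smul_mem _ hy
  have htx : t' • x ≠ 0 := smul_ne_zero ht'0 hx
  set e : F := ⟨t' • x, hT x⟩ with he
  have he0 : e ≠ 0 := fun h => htx (by simpa [he, Subtype.ext_iff] using h)
  have hrepr : b.repr e ≠ 0 := fun h => he0 (b.repr.map_eq_zero_iff.mp h)
  obtain ⟨j, hj⟩ : ∃ j, b.repr e j ≠ 0 := by
    by_contra h
    push_neg at h
    exact hrepr (Finsupp.ext h)
  let ψ : M →ₗ[D] M :=
    (LinearMap.toSpanSingleton D M x).comp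
      ((Finsupp.lapply j).comp
        (b.repr.toLinearMap.comp (LinearMap.codRestrict F (t' • LinearMap.id) hT)))
  refine ⟨ψ, b.repr e j, hj, ?_, ?_⟩
  · rintro _ ⟨m, rfl⟩
    exact Submodule.mem_span_singleton.mpr ⟨_, rfl⟩
  · refine ⟨x, ?_⟩
    show (b.repr (⟨t' • x, hT x⟩ : F) j) • x = b.repr e j • x
    rfl

theorem comap_subtype_span_singleton {M : Type u} [AddCommGroup M] [Module R M]
    (A : Submodule R M) (x : M) (hx : x ∈ A) :
    (R ∙ x).comap A.subtype = (R ∙ (⟨x, hx⟩ : A)) := by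
  ext a
  simp only [Submodule.mem_comap, Submodule.coe_subtype, Submodule.mem_span_singleton]
  constructor
  · rintro ⟨r, hr⟩
    exact ⟨r, Subtype.ext hr⟩
  · rintro ⟨r, hr⟩
    exact ⟨r, congrArg Subtype.val hr⟩

theorem Wide.core (hP : Wide R P) (I : Ideal R)
    (IH : ∀ J : Ideal R, I < J → ∀ (M : Type u) [AddCommGroup M] [Module R M]
      [Module.Finite R M], P M → ∀ x : M,
      J ≤ LinearMap.ker (LinearMap.toSpanSingleton R M x) → P (M ⧸ (R ∙ x)))
    (M : Type u) [AddCommGroup M] [Module R M] [Module.Finite R M] (hM : P M)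
    (x : M) (hx0 : x ≠ 0)
    (hann : LinearMap.ker (LinearMap.toSpanSingleton R M x) = I)
    (htor : ∀ (m : M) (r : R), r ∈ I → r • m = 0) :
    P (M ⧸ (R ∙ x)) := by
  have hmem : ∀ r : R, r ∈ I ↔ r • x = 0 := fun r => by
    rw [← hann]; simp [LinearMap.mem_ker]
  have hItop : I ≠ ⊤ := by
    intro h
    exact hx0 (by simpa using (hmem 1).mp (h ▸ Submodule.mem_top))
  by_cases hp : I.IsPrime
  · -- prime case
    obtain ⟨s₀, hs₀, hbound⟩ := exists_torsion_bound (M := M) I hp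
    set T : Submodule R M := LinearMap.ker (s₀ • (LinearMap.id : M →ₗ[R] M)) with hT
    haveI := finite_submodule T
    haveI := finite_quotient T
    have hPT : P T := hP.ker M M _ hM hM
    have hPMT : P (M ⧸ T) := by
      have hrg := hP.range (s₀ • (LinearMap.id : M →ₗ[R] M)) hM hM
      haveI := finite_submodule (LinearMap.range (s₀ • (LinearMap.id : M →ₗ[R] M)))
      exact hP.iso _ _ (LinearMap.quotKerEquivRange _).symm hrg
    have hmemT : ∀ m : M, m ∈ T ↔ s₀ • m = 0 := fun m => by
      simp [hT, LinearMap.mem_ker]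
    have hxT : x ∉ T := fun h => hs₀ ((hmem s₀).mpr ((hmemT x).mp h))
    set Q := M ⧸ T with hQ
    set xt : Q := Submodule.Quotient.mk x with hxt
    have hxt0 : xt ≠ 0 := fun h => hxT ((Submodule.Quotient.mk_eq_zero T).mp h)
    have htorQ : Module.IsTorsionBySet R Q (I : Set R) := by
      rintro q ⟨a, haI⟩
      obtain ⟨m, rfl⟩ := Submodule.Quotient.mk_surjective T q
      show a • (Submodule.Quotient.mk m : Q) = 0
      rw [← Submodule.Quotient.mk_smul, htor m a haI, Submodule.Quotient.mk_zero]
    letI instD : Module (R ⧸ I) Q := htorQ.module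
    haveI instTower : IsScalarTower R (R ⧸ I) Q := htorQ.isScalarTower
    haveI instFinD : Module.Finite (R ⧸ I) Q :=
      Module.Finite.of_restrictScalars_finite R (R ⧸ I) Q
    haveI : NoZeroSMulDivisors (R ⧸ I) Q := by
      refine ⟨fun {c m} h => ?_⟩
      obtain ⟨t, rfl⟩ := Ideal.Quotient.mk_surjective c
      by_cases ht : t ∈ I
      · exact Or.inl (Ideal.Quotient.eq_zero_iff_mem.mpr ht)
      · refine Or.inr ?_
        obtain ⟨m, rfl⟩ := Submodule.Quotient.mk_surjective T m
        have h1 : t • (Submodule.Quotient.mk m : Q) = 0 := h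
        rw [← Submodule.Quotient.mk_smul, Submodule.Quotient.mk_eq_zero] at h1
        have h2 : (s₀ * t) • m = 0 := by rw [mul_smul]; exact (hmemT _).mp h1
        have h3 : s₀ • m = 0 :=
          hbound (s₀ * t) (fun hh => (hp.mem_or_mem hh).elim hs₀ ht) m h2
        exact (Submodule.Quotient.mk_eq_zero T).mpr ((hmemT m).mpr h3)
    obtain ⟨ψD, c, hc0, hrange, hcx⟩ := exists_functional (D := R ⧸ I) (M := Q) hxt0
    obtain ⟨t₀, rfl⟩ := Ideal.Quotient.mk_surjective c
    have ht₀ : t₀ ∉ I := fun h => hc0 (Ideal.Quotient.eq_zero_iff_mem.mpr h)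
    set ψ : Q →ₗ[R] Q := ψD.restrictScalars R with hψ
    set C : Submodule R Q := LinearMap.range ψ with hC
    have hCx : C ≤ (R ∙ xt) := by
      rintro _ ⟨m, rfl⟩
      have h4 : ψD m ∈ ((R ⧸ I) ∙ xt) := hrange ⟨m, rfl⟩
      obtain ⟨d, hd⟩ := Submodule.mem_span_singleton.mp h4
      obtain ⟨u, rfl⟩ := Ideal.Quotient.mk_surjective d
      exact Submodule.mem_span_singleton.mpr ⟨u, hd⟩
    have ht₀x : t₀ • xt ∈ C := by
      obtain ⟨m, hm⟩ := hcx
      exact ⟨m, hm⟩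
    haveI := finite_quotient C
    have h4 : P (Q ⧸ C) := hP.coker Q Q ψ hPMT hPMT
    have hlt : I < I ⊔ Ideal.span {t₀} := by
      refine lt_of_le_of_ne le_sup_left fun hh => ht₀ ?_
      rw [hh]
      exact Submodule.mem_sup_right (Ideal.subset_span rfl)
    set yt : (Q ⧸ C) := Submodule.Quotient.mk xt with hyt
    have h5 : P ((Q ⧸ C) ⧸ (R ∙ yt)) := by
      refine IH _ hlt _ h4 _ (sup_le ?_ ?_)
      · intro t ht
        rw [LinearMap.mem_ker, LinearMap.toSpanSingleton_apply, hyt,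
          ← Submodule.Quotient.mk_smul, hxt, ← Submodule.Quotient.mk_smul,
          htor x t ht, Submodule.Quotient.mk_zero, Submodule.Quotient.mk_zero]
      · rw [Ideal.span_le, Set.singleton_subset_iff, SetLike.mem_coe,
          LinearMap.mem_ker, LinearMap.toSpanSingleton_apply, hyt,
          ← Submodule.Quotient.mk_smul]
        exact (Submodule.Quotient.mk_eq_zero _).mpr ht₀x
    have hmapC : (R ∙ xt).map C.mkQ = (R ∙ yt) := by
      rw [Submodule.map_span C.mkQ {xt}, Set.image_singleton]
      rfl
    have hsupC : C ⊔ (R ∙ xt) = (R ∙ xt) := sup_eq_right.mpr hCx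
    have e2 : ((Q ⧸ C) ⧸ (R ∙ yt)) ≃ₗ[R] Q ⧸ (R ∙ xt) :=
      (Submodule.quotEquivOfEq _ _ hmapC.symm) ≪≫ₗ
        (Submodule.quotientQuotientEquivQuotientSup _ _) ≪≫ₗ
          (Submodule.quotEquivOfEq _ _ hsupC)
    haveI := finite_quotient (R ∙ yt)
    haveI := finite_quotient (R ∙ xt)
    have h6 : P (Q ⧸ (R ∙ xt)) := hP.iso _ _ e2 h5
    have hmapT : (R ∙ x).map T.mkQ = (R ∙ xt) := by
      rw [Submodule.map_span T.mkQ {x}, Set.image_singleton]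
      rfl
    have e3 : (M ⧸ (T ⊔ (R ∙ x))) ≃ₗ[R] (Q ⧸ (R ∙ xt)) :=
      (Submodule.quotientQuotientEquivQuotientSup T (R ∙ x)).symm ≪≫ₗ
        Submodule.quotEquivOfEq _ _ hmapT
    haveI := finite_quotient (T ⊔ (R ∙ x))
    have h7 : P (M ⧸ (T ⊔ (R ∙ x))) := hP.iso _ _ e3.symm h6
    have hinf : T ⊓ (R ∙ x) = ⊥ := by
      rw [eq_bot_iff]
      intro m hm
      obtain ⟨hmT, hmx⟩ := hm
      obtain ⟨r, rfl⟩ := Submodule.mem_span_singleton.mp hmx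
      have h8a : (s₀ * r) • x = 0 := by rw [mul_smul]; exact (hmemT _).mp hmT
      have h8b : r ∈ I := ((hp.mem_or_mem ((hmem _).mpr h8a)).resolve_left hs₀)
      exact (Submodule.mem_bot R).mpr ((hmem r).mp h8b)
    have e4 : (T ⧸ ((T ⊓ (R ∙ x)).comap T.subtype)) ≃ₗ[R] T :=
      Submodule.quotEquivOfEqBot _
        (by rw [hinf, Submodule.comap_bot, Submodule.ker_subtype])
    haveI := finite_submodule (T ⊔ (R ∙ x))
    haveI := finite_quotient ((T ⊓ (R ∙ x)).comap T.subtype)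
    haveI := finite_quotient ((R ∙ x).comap (T ⊔ (R ∙ x)).subtype)
    have h8 : P (↥(T ⊔ (R ∙ x)) ⧸ ((R ∙ x).comap (T ⊔ (R ∙ x)).subtype)) := by
      have h8c : P (T ⧸ ((T ⊓ (R ∙ x)).comap T.subtype)) := hP.iso _ _ e4.symm hPT
      exact hP.iso _ _ (LinearMap.quotientInfEquivSupQuotient T (R ∙ x)) h8c
    exact hP.subquot (T ⊔ (R ∙ x)) (R ∙ x) le_sup_right h8 h7
  · -- non-prime case
    obtain ⟨r, hr, s, hs, hrs⟩ := (Ideal.not_isPrime_iff.mp hp).resolve_left hItop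
    have hlt1 : I < I ⊔ Ideal.span {s} := by
      refine lt_of_le_of_ne le_sup_left fun h => hs ?_
      rw [h]
      exact Submodule.mem_sup_right (Ideal.subset_span rfl)
    have h1 : P (M ⧸ (R ∙ (r • x))) := by
      refine IH _ hlt1 M hM (r • x) (sup_le ?_ ?_)
      · intro t ht
        rw [LinearMap.mem_ker, LinearMap.toSpanSingleton_apply, smul_smul, mul_comm,
          mul_smul, (hmem t).mp ht, smul_zero]
      · rw [Ideal.span_le, Set.singleton_subset_iff]
        rw [SetLike.mem_coe, LinearMap.mem_ker, LinearMap.toSpanSingleton_apply, smul_smul]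
        exact (hmem (s * r)).mp (mul_comm r s ▸ hrs)
    haveI := finite_quotient (R ∙ (r • x))
    have hlt2 : I < I ⊔ Ideal.span {r} := by
      refine lt_of_le_of_ne le_sup_left fun h => hr ?_
      rw [h]
      exact Submodule.mem_sup_right (Ideal.subset_span rfl)
    have h2 : P ((M ⧸ (R ∙ (r • x))) ⧸
        (R ∙ (Submodule.Quotient.mk x : M ⧸ (R ∙ (r • x))))) := by
      refine IH _ hlt2 _ h1 _ (sup_le ?_ ?_)
      · intro t ht
        rw [LinearMap.mem_ker, LinearMap.toSpanSingleton_apply, ← Submodule.Quotient.mk_smul,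
          (hmem t).mp ht, Submodule.Quotient.mk_zero]
      · rw [Ideal.span_le, Set.singleton_subset_iff]
        rw [SetLike.mem_coe, LinearMap.mem_ker, LinearMap.toSpanSingleton_apply,
          ← Submodule.Quotient.mk_smul]
        exact (Submodule.Quotient.mk_eq_zero _).mpr (Submodule.mem_span_singleton_self _)
    have hmap : (R ∙ x).map (R ∙ (r • x)).mkQ
        = (R ∙ (Submodule.Quotient.mk x : M ⧸ (R ∙ (r • x)))) := by
      rw [Submodule.map_span ((R ∙ (r • x)).mkQ) {x}, Set.image_singleton]
      rfl
    have hsup : (R ∙ (r • x)) ⊔ (R ∙ x) = (R ∙ x) := by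
      refine sup_eq_right.mpr ?_
      rw [Submodule.span_le, Set.singleton_subset_iff]
      exact Submodule.mem_span_singleton.mpr ⟨r, rfl⟩
    have e1 : ((M ⧸ (R ∙ (r • x))) ⧸
          (R ∙ (Submodule.Quotient.mk x : M ⧸ (R ∙ (r • x))))) ≃ₗ[R] M ⧸ (R ∙ x) :=
      (Submodule.quotEquivOfEq _ _ hmap.symm) ≪≫ₗ
        (Submodule.quotientQuotientEquivQuotientSup _ _) ≪≫ₗ
          (Submodule.quotEquivOfEq _ _ hsup)
    haveI := finite_quotient (R ∙ (Submodule.Quotient.mk x : M ⧸ (R ∙ (r • x))))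
    haveI := finite_quotient (R ∙ x)
    exact hP.iso _ _ e1 h2

theorem Wide.cyclic (hP : Wide R P) (I : Ideal R) :
    ∀ (M : Type u) [AddCommGroup M] [Module R M] [Module.Finite R M],
      P M → ∀ x : M, I ≤ LinearMap.ker (LinearMap.toSpanSingleton R M x) →
      P (M ⧸ (R ∙ x)) := by
  haveI : IsNoetherian R R := inferInstance
  refine IsNoetherian.induction
    (P := fun I : Ideal R => ∀ (M : Type u) [AddCommGroup M] [Module R M] [Module.Finite R M],
      P M → ∀ x : M, I ≤ LinearMap.ker (LinearMap.toSpanSingleton R M x) → P (M ⧸ (R ∙ x)))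
    (fun I IH => ?_) I
  intro M _ _ _ hM x hIx
  rcases lt_or_eq_of_le hIx with hlt | heq
  · exact IH _ hlt M hM x le_rfl
  by_cases hx0 : x = 0
  · subst hx0
    haveI := finite_quotient (R ∙ (0 : M))
    refine hP.iso _ _ (Submodule.quotEquivOfEqBot _ ?_).symm hM
    exact Submodule.span_zero_singleton R
  have hmem : ∀ r : R, r ∈ I → r • x = 0 := by
    intro r hr
    rw [heq, LinearMap.mem_ker, LinearMap.toSpanSingleton_apply] at hr
    exact hr
  obtain ⟨k, v, hvI⟩ :=
    Submodule.fg_iff_exists_fin_generating_family.mp (IsNoetherian.noetherian I)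
  set fI : M →ₗ[R] (Fin k → M) := LinearMap.pi (fun i => (v i) • LinearMap.id) with hfI
  set A : Submodule R M := LinearMap.ker fI with hA
  have hvmem : ∀ i, v i ∈ I := fun i => hvI ▸ Submodule.subset_span ⟨i, rfl⟩
  have hxA : x ∈ A := by
    rw [hA, LinearMap.mem_ker, hfI]
    funext i
    simp only [LinearMap.pi_apply, LinearMap.smul_apply, LinearMap.id_coe, id_eq,
      Pi.zero_apply]
    exact hmem (v i) (hvmem i)
  have hIA : ∀ (a : M), a ∈ A → ∀ r ∈ I, r • a = 0 := by
    intro a ha r hr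
    rw [← hvI] at hr
    refine Submodule.span_induction ?_ ?_ ?_ ?_ hr
    · rintro _ ⟨i, rfl⟩
      have := congrFun (LinearMap.mem_ker.mp ha) i
      simpa [hfI] using this
    · rw [zero_smul]
    · intro y z _ _ hy hz
      rw [add_smul, hy, hz, add_zero]
    · intro c y _ hy
      rw [smul_eq_mul, mul_smul, hy, smul_zero]
  haveI := finite_submodule A
  have hPA : P A := hP.ker M (Fin k → M) fI hM (hP.pi hM k)
  set x' : A := ⟨x, hxA⟩ with hx'
  have hann' : LinearMap.ker (LinearMap.toSpanSingleton R A x') = I := by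
    ext r
    rw [LinearMap.mem_ker, LinearMap.toSpanSingleton_apply]
    constructor
    · intro h
      have hcoe : r • x = 0 := congrArg Subtype.val h
      rw [heq, LinearMap.mem_ker, LinearMap.toSpanSingleton_apply]
      exact hcoe
    · intro hr
      exact Subtype.ext (by simpa using hmem r hr)
  have hx0' : x' ≠ 0 := fun h => hx0 (congrArg Subtype.val h)
  have hcore : P (A ⧸ (R ∙ x')) := by
    refine hP.core I (fun J hJ => IH J hJ) A hPA x' hx0' hann' ?_
    intro m r hr
    exact Subtype.ext (by simpa using hIA m m.2 r hr)
  have h2 : P (M ⧸ A) := by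
    haveI := finite_quotient A
    haveI := finite_submodule (LinearMap.range fI)
    have hrg := hP.range fI hM (hP.pi hM k)
    exact hP.iso _ _ (LinearMap.quotKerEquivRange fI).symm hrg
  refine hP.subquot A (R ∙ x) ?_ ?_ h2
  · rw [Submodule.span_le, Set.singleton_subset_iff]
    exact hxA
  · haveI := finite_quotient ((R ∙ x).comap A.subtype)
    haveI := finite_quotient (R ∙ x')
    refine hP.iso _ _
      (Submodule.quotEquivOfEq _ _ (comap_subtype_span_singleton A x hxA)).symm hcore

theorem Wide.quot (hP : Wide R P) (M : Type u) [AddCommGroup M] [Module R M]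
    [Module.Finite R M] (hM : P M) (N : Submodule R M) : P (M ⧸ N) := by
  classical
  haveI : IsNoetherian R M := isNoetherian_of_isNoetherianRing_of_finite R M
  obtain ⟨s, rfl⟩ := (IsNoetherian.noetherian N)
  induction s using Finset.induction_on with
  | empty =>
    haveI := finite_quotient (Submodule.span R ((∅ : Finset M) : Set M))
    refine hP.iso _ _ (Submodule.quotEquivOfEqBot _ ?_).symm hM
    simp
  | @insert a s ha ih =>
    haveI := finite_quotient (Submodule.span R (s : Set M))
    set z : M ⧸ (Submodule.span R (s : Set M)) := Submodule.Quotient.mk a with hz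
    have hcyc : P ((M ⧸ (Submodule.span R (s : Set M))) ⧸ (R ∙ z)) :=
      hP.cyclic ⊥ _ ih z bot_le
    have hmapz : (R ∙ a).map (Submodule.span R (s : Set M)).mkQ = (R ∙ z) := by
      rw [Submodule.map_span (Submodule.span R (s : Set M)).mkQ {a}, Set.image_singleton]
      rfl
    have hins : Submodule.span R (↑(insert a s) : Set M)
        = Submodule.span R (s : Set M) ⊔ (R ∙ a) := by
      rw [Finset.coe_insert, Submodule.span_insert]
      exact sup_comm _ _
    have e : ((M ⧸ (Submodule.span R (s : Set M))) ⧸ (R ∙ z)) ≃ₗ[R]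
        M ⧸ (Submodule.span R (↑(insert a s) : Set M)) :=
      (Submodule.quotEquivOfEq _ _ hmapz.symm) ≪≫ₗ
        (Submodule.quotientQuotientEquivQuotientSup _ _) ≪≫ₗ
          (Submodule.quotEquivOfEq _ _ hins.symm)
    haveI := finite_quotient (R ∙ z)
    haveI := finite_quotient (Submodule.span R (↑(insert a s) : Set M))
    exact hP.iso _ _ e hcyc

theorem Wide.sub (hP : Wide R P) (M : Type u) [AddCommGroup M] [Module R M]
    [Module.Finite R M] (hM : P M) (N : Submodule R M) : P N := by
  haveI := finite_quotient N
  haveI := finite_submodule (LinearMap.ker N.mkQ)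
  haveI := finite_submodule N
  have h1 := hP.ker M (M ⧸ N) N.mkQ hM (hP.quot M hM N)
  exact hP.iso _ _ (LinearEquiv.ofEq _ _ (Submodule.ker_mkQ N)) h1

end CoherentSerre

/-- Over a commutative noetherian ring, every coherent subcategory of the category of
finitely generated modules (an isomorphism-invariant predicate closed under kernels,
cokernels and extensions) is a Serre subcategory: it is closed under submodules, and
hence also under quotient modules. -/
theorem coherent_subcategory_is_serre
    (R : Type u) [CommRing R] [IsNoetherianRing R]
    (P : ∀ (M : Type u) [AddCommGroup M] [Module R M], Prop)
    (hiso : ∀ (M N : Type u) [AddCommGroup M] [Module R M] [AddCommGroup N] [Module R N]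
      [Module.Finite R M] [Module.Finite R N], (M ≃ₗ[R] N) → P M → P N)
    (hker : ∀ (M N : Type u) [AddCommGroup M] [Module R M] [AddCommGroup N] [Module R N]
      [Module.Finite R M] [Module.Finite R N] (f : M →ₗ[R] N),
      P M → P N → P (LinearMap.ker f))
    (hcoker : ∀ (M N : Type u) [AddCommGroup M] [Module R M] [AddCommGroup N] [Module R N]
      [Module.Finite R M] [Module.Finite R N] (f : M →ₗ[R] N),
      P M → P N → P (N ⧸ LinearMap.range f))
    (hext : ∀ (A B C : Type u) [AddCommGroup A] [Module R A] [AddCommGroup B] [Module R B]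
      [AddCommGroup C] [Module R C] [Module.Finite R A] [Module.Finite R B]
      [Module.Finite R C] (f : A →ₗ[R] B) (g : B →ₗ[R] C),
      Function.Injective f → Function.Surjective g → LinearMap.range f = LinearMap.ker g →
      P A → P C → P B) :
    (∀ (M : Type u) [AddCommGroup M] [Module R M] [Module.Finite R M]
      (N : Submodule R M), P M → P N) ∧
    (∀ (M : Type u) [AddCommGroup M] [Module R M] [Module.Finite R M]
      (N : Submodule R M), P M → P (M ⧸ N)) := by
  have hP : CoherentSerre.Wide R P := ⟨hiso, hker, hcoker, hext⟩
  constructor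
  · intro M _ _ _ N hM
    exact hP.sub M hM N
  · intro M _ _ _ N hM
    exact hP.quot M hM N
end

section
/- Let R be a commutative noetherian ring. The assignments S ↦ {R-modules M with Supp M ⊆ S} and T ↦ ⋃_{M with T M} Supp M are mutually inverse bijections between the specialization-closed subsets of Spec R and the hereditary torsion classes of the category of all R-modules. Concretely: (a) for every specialization-closed subset S of Spec R, the union of Supp M over all R-modules M with Supp M ⊆ S equals S; and (b) for every hereditary torsion class T and every R-module M, T M holds if and only if Supp M ⊆ ⋃_{N with T N} Supp N. -/
universe u

section Aux

variable {R : Type u} [CommRing R] [IsNoetherianRing R] {T : ModuleCat.{u} R → Prop}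

/-- Any two subsingleton modules are linearly equivalent. -/
noncomputable def zeroEquiv (A B : Type u) [AddCommGroup A] [Module R A]
    [AddCommGroup B] [Module R B] [Subsingleton A] [Subsingleton B] : A ≃ₗ[R] B :=
  LinearEquiv.ofLinear 0 0 (LinearMap.ext fun _ => Subsingleton.elim _ _)
    (LinearMap.ext fun _ => Subsingleton.elim _ _)

lemma aux_zero
    (hiso : ∀ M N : ModuleCat.{u} R, (M ≃ₗ[R] N) → T M → T N)
    (hsum : ∀ (ι : Type u) (A : ι → ModuleCat.{u} R), (∀ i, T (A i)) →
        T (ModuleCat.of R (DirectSum ι (fun i => A i))))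
    (M : ModuleCat.{u} R) (hM : Subsingleton M) : T M := by
  have h := hsum PEmpty (fun i => i.elim) (fun i => i.elim)
  haveI : ∀ i : PEmpty.{u+1}, Subsingleton ((fun (i : PEmpty.{u+1}) => i.elim : PEmpty → ModuleCat.{u} R) i) :=
    fun i => i.elim
  exact hiso _ _ (zeroEquiv _ _) h

lemma aux_cyclic
    (hiso : ∀ M N : ModuleCat.{u} R, (M ≃ₗ[R] N) → T M → T N)
    (hquot : ∀ (M : ModuleCat.{u} R) (N : Submodule R M), T M → T (ModuleCat.of R (M ⧸ N)))
    (I J : Ideal R) (hIJ : I ≤ J) (hT : T (ModuleCat.of R (R ⧸ I))) :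
    T (ModuleCat.of R (R ⧸ J)) := by
  have h := hquot (ModuleCat.of R (R ⧸ I)) (Submodule.map I.mkQ J) hT
  exact hiso _ _ (Submodule.quotientQuotientEquivQuotient I J hIJ) h

lemma aux_prime
    (hiso : ∀ M N : ModuleCat.{u} R, (M ≃ₗ[R] N) → T M → T N)
    (hsub : ∀ (M : ModuleCat.{u} R) (N : Submodule R M), T M → T (ModuleCat.of R N))
    (hquot : ∀ (M : ModuleCat.{u} R) (N : Submodule R M), T M → T (ModuleCat.of R (M ⧸ N)))
    (N : ModuleCat.{u} R) (hTN : T N) (p : PrimeSpectrum R)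
    (hp : p ∈ Module.support R N) : T (ModuleCat.of R (R ⧸ p.asIdeal)) := by
  obtain ⟨x, hx⟩ := Module.mem_support_iff_exists_annihilator.mp hp
  have h1 : Ideal.torsionOf R N x = (R ∙ x).annihilator := by
    ext r
    rw [Submodule.mem_annihilator_span_singleton, Ideal.mem_torsionOf_iff]
  have h2 : T (ModuleCat.of R (R ∙ x)) := hsub N _ hTN
  have h3 : T (ModuleCat.of R (R ⧸ Ideal.torsionOf R N x)) :=
    hiso _ _ (Ideal.quotTorsionOfEquivSpanSingleton R N x).symm h2
  exact aux_cyclic hiso hquot _ _ (h1 ▸ hx) h3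

lemma aux_fg
    (hiso : ∀ M N : ModuleCat.{u} R, (M ≃ₗ[R] N) → T M → T N)
    (hsub : ∀ (M : ModuleCat.{u} R) (N : Submodule R M), T M → T (ModuleCat.of R N))
    (hquot : ∀ (M : ModuleCat.{u} R) (N : Submodule R M), T M → T (ModuleCat.of R (M ⧸ N)))
    (hext : ∀ (A B C : ModuleCat.{u} R) (f : A →ₗ[R] B) (g : B →ₗ[R] C),
        Function.Injective f → Function.Surjective g →
        LinearMap.range f = LinearMap.ker g → T A → T C → T B)
    (hsum : ∀ (ι : Type u) (A : ι → ModuleCat.{u} R), (∀ i, T (A i)) →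
        T (ModuleCat.of R (DirectSum ι (fun i => A i))))
    (M : ModuleCat.{u} R) (hM : IsNoetherian R M)
    (hsupp : Module.support R M ⊆ ⋃ (N : ModuleCat.{u} R) (_ : T N), Module.support R N) :
    T M := by
  obtain ⟨N₀, hN₀s, hmax⟩ := (set_has_maximal_iff_noetherian.mpr hM)
    {N : Submodule R M | T (ModuleCat.of R N)}
    ⟨⊥, aux_zero hiso hsum _ inferInstance⟩
  rcases eq_or_ne N₀ ⊤ with h | h
  · subst h
    exact hiso _ _ (Submodule.topEquiv) hN₀s
  · exfalso
    haveI : Nontrivial (M ⧸ N₀) :=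
      Submodule.Quotient.nontrivial_iff.mpr h
    obtain ⟨p, hprime, x, hxp⟩ := (associatedPrimes.nonempty R (M ⧸ N₀)).imp fun _ h => isAssociatedPrime_iff.mp h
    set P : PrimeSpectrum R := ⟨p, hprime⟩
    have hPsupp : P ∈ Module.support R (M ⧸ N₀) :=
      Module.mem_support_iff_exists_annihilator.mpr ⟨x, by
        intro r hr
        show r ∈ p
        rw [hxp, Submodule.mem_colon_singleton, Submodule.mem_bot]
        rwa [Submodule.mem_annihilator_span_singleton] at hr⟩
    have hPU : P ∈ ⋃ (N : ModuleCat.{u} R) (_ : T N), Module.support R N :=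
      hsupp (Module.support_subset_of_surjective N₀.mkQ
        (Submodule.Quotient.mk_surjective N₀) hPsupp)
    obtain ⟨N, hTN, hPN⟩ := Set.mem_iUnion₂.mp hPU
    have hTp : T (ModuleCat.of R (R ⧸ p)) := aux_prime hiso hsub hquot N hTN P hPN
    -- the cyclic submodule `R ∙ x` of `M ⧸ N₀` is in `T`
    have h1 : Ideal.torsionOf R (M ⧸ N₀) x = p := by
      rw [hxp]; ext r
      rw [Ideal.mem_torsionOf_iff, Submodule.mem_colon_singleton, Submodule.mem_bot]
    rw [← h1] at hTp
    have hTspan : T (ModuleCat.of R (R ∙ x : Submodule R (M ⧸ N₀))) :=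
      hiso _ _ (Ideal.quotTorsionOfEquivSpanSingleton R (M ⧸ N₀) x) hTp
    -- lift to a submodule N₁ of M
    set N₁ : Submodule R M := (R ∙ x).comap N₀.mkQ with hN₁
    have hle : N₀ ≤ N₁ := by
      intro y hy
      show N₀.mkQ y ∈ (R ∙ x)
      rw [Submodule.mkQ_apply, (Submodule.Quotient.mk_eq_zero _).mpr hy]
      exact zero_mem _
    have hxne : x ≠ 0 := by
      intro hx0
      rw [hx0, Ideal.torsionOf_zero] at h1
      exact hprime.ne_top h1.symm
    obtain ⟨y, hy⟩ := Submodule.Quotient.mk_surjective N₀ x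
    have hyN₁ : y ∈ N₁ := by
      show N₀.mkQ y ∈ (R ∙ x)
      rw [Submodule.mkQ_apply, hy]
      exact Submodule.mem_span_singleton_self x
    have hyN₀ : y ∉ N₀ := by
      intro hy0
      exact hxne (by rw [← hy, (Submodule.Quotient.mk_eq_zero _).mpr hy0])
    have hlt : N₀ < N₁ := lt_of_le_of_ne hle (fun e => hyN₀ (e ▸ hyN₁))
    -- extension
    have hTN1 : T (ModuleCat.of R N₁) := by
      refine hext (ModuleCat.of R N₀) (ModuleCat.of R N₁)
        (ModuleCat.of R (R ∙ x : Submodule R (M ⧸ N₀)))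
        (Submodule.inclusion hle)
        (LinearMap.codRestrict (R ∙ x) (N₀.mkQ ∘ₗ N₁.subtype) (fun z => z.2))
        (Submodule.inclusion_injective hle) ?_ ?_ hN₀s hTspan
      · rintro ⟨z, hz⟩
        obtain ⟨w, hw⟩ := Submodule.Quotient.mk_surjective N₀ z
        refine ⟨⟨w, ?_⟩, ?_⟩
        · show N₀.mkQ w ∈ (R ∙ x)
          rw [Submodule.mkQ_apply, hw]; exact hz
        · apply Subtype.ext
          exact hw
      · rw [Submodule.range_inclusion]
        ext z
        rw [LinearMap.mem_ker, Submodule.mem_comap, Subtype.ext_iff]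
        show (z : M) ∈ N₀ ↔ N₀.mkQ z.1 = 0
        rw [Submodule.mkQ_apply, Submodule.Quotient.mk_eq_zero]
    exact hmax N₁ hTN1 hlt

end Aux

/-- Classification of hereditary torsion classes of `Mod R` over a commutative noetherian
ring `R`: (a) for every specialization-closed `S ⊆ Spec R`, the union of the supports of
the modules supported in `S` is exactly `S`; (b) for every hereditary torsion class `T`
(an isomorphism-invariant predicate on `R`-modules closed under submodules, quotient
modules, extensions and arbitrary direct sums) and every `R`-module `M`, `T M` holds iff
`Supp M` is contained in the union of the supports of the modules in `T`. Thus
`S ↦ {M : Supp M ⊆ S}` and `T ↦ ⋃_{T M} Supp M` are mutually inverse bijections between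
specialization-closed subsets of `Spec R` and hereditary torsion classes of `Mod R`. -/
theorem torsion_classes_classification
    (R : Type u) [CommRing R] [IsNoetherianRing R] :
    (∀ S : Set (PrimeSpectrum R),
      (∀ p q : PrimeSpectrum R, p ∈ S → p.asIdeal ≤ q.asIdeal → q ∈ S) →
      (⋃ (M : ModuleCat.{u} R) (_ : Module.support R M ⊆ S),
        Module.support R M) = S) ∧
    (∀ T : ModuleCat.{u} R → Prop,
      (∀ M N : ModuleCat.{u} R, (M ≃ₗ[R] N) → T M → T N) →
      (∀ (M : ModuleCat.{u} R) (N : Submodule R M), T M → T (ModuleCat.of R N)) →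
      (∀ (M : ModuleCat.{u} R) (N : Submodule R M), T M → T (ModuleCat.of R (M ⧸ N))) →
      (∀ (A B C : ModuleCat.{u} R) (f : A →ₗ[R] B) (g : B →ₗ[R] C),
        Function.Injective f → Function.Surjective g →
        LinearMap.range f = LinearMap.ker g → T A → T C → T B) →
      (∀ (ι : Type u) (A : ι → ModuleCat.{u} R), (∀ i, T (A i)) →
        T (ModuleCat.of R (DirectSum ι (fun i => A i)))) →
      ∀ M : ModuleCat.{u} R,
        (T M ↔ Module.support R M ⊆
          ⋃ (N : ModuleCat.{u} R) (_ : T N), Module.support R N)) := by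
  constructor
  · intro S hS
    apply subset_antisymm
    · exact Set.iUnion₂_subset fun M hM => hM
    · intro p hp
      refine Set.mem_iUnion₂.mpr ⟨ModuleCat.of R (R ⧸ p.asIdeal), ?_, ?_⟩
      · intro q hq
        refine hS p q hp (le_trans ?_ (Module.annihilator_le_of_mem_support hq))
        intro r hr
        rw [Module.mem_annihilator]
        intro m
        obtain ⟨a, rfl⟩ := Submodule.Quotient.mk_surjective p.asIdeal m
        rw [← Submodule.Quotient.mk_smul, Submodule.Quotient.mk_eq_zero]
        simpa [smul_eq_mul] using Ideal.mul_mem_right a p.asIdeal hr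
      · refine Module.mem_support_iff_exists_annihilator.mpr
          ⟨Submodule.Quotient.mk 1, fun r hr => ?_⟩
        rw [Submodule.mem_annihilator_span_singleton] at hr
        rw [← Submodule.Quotient.mk_smul, Submodule.Quotient.mk_eq_zero] at hr
        simpa using hr
  · intro T hiso hsub hquot hext hsum M
    constructor
    · intro hTM p hp
      exact Set.mem_iUnion₂.mpr ⟨M, hTM, hp⟩
    · intro hsupp
      classical
      set ι := {N : Submodule R M // N.FG} with hι
      set A : ι → ModuleCat.{u} R := fun i => ModuleCat.of R i.1 with hA
      have hTA : ∀ i, T (A i) := by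
        intro i
        refine aux_fg hiso hsub hquot hext hsum (A i)
          (isNoetherian_of_fg_of_noetherian i.1 i.2) ?_
        exact le_trans (Module.support_subset_of_injective i.1.subtype
          Subtype.val_injective) hsupp
      have hDS := hsum ι A hTA
      set φ : DirectSum ι (fun i => A i) →ₗ[R] M :=
        DirectSum.toModule R ι M (fun i => i.1.subtype) with hφ
      have hsurj : Function.Surjective φ := by
        intro x
        refine ⟨DirectSum.lof R ι (fun i => A i)
          ⟨Submodule.span R {x}, Submodule.fg_span_singleton x⟩
          ⟨x, Submodule.mem_span_singleton_self x⟩, ?_⟩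
        rw [hφ, DirectSum.toModule_lof]; rfl
      have hq := hquot (ModuleCat.of R (DirectSum ι (fun i => A i))) (LinearMap.ker φ) hDS
      exact hiso _ _ (φ.quotKerEquivOfSurjective hsurj) hq
end

section
/- Let R be a commutative noetherian ring. (a) If S is a specialization-closed subset of Spec R, then a finitely generated R-module M satisfies Ass M ⊆ S if and only if it satisfies Supp M ⊆ S. (b) If P is a Serre subcategory of the category of finitely generated R-modules, then ⋃_{M with P M} Ass M = ⋃_{M with P M} Supp M. -/
universe u

section Aux
variable {R : Type u} [CommRing R]

lemma my_ass_mem_supp {M : Type u} [AddCommGroup M] [Module R M]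
    {p : PrimeSpectrum R} (h : p.asIdeal ∈ associatedPrimes R M) :
    p ∈ Module.support R M := by
  obtain ⟨hp, x, hx⟩ := h
  exact Module.mem_support_iff_exists_annihilator.mpr ⟨x, hx ▸ fun r hr => Ideal.le_radical
    (by rwa [Submodule.mem_colon_singleton, Submodule.mem_bot,
      ← Submodule.mem_annihilator_span_singleton])⟩

lemma my_exists_ass_le [IsNoetherianRing R] {M : Type u} [AddCommGroup M] [Module R M]
    {p : PrimeSpectrum R} (hp : p ∈ Module.support R M) :
    ∃ q : Ideal R, IsAssociatedPrime q M ∧ q ≤ p.asIdeal := by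
  set S := p.asIdeal.primeCompl
  haveI : IsNoetherianRing (Localization S) :=
    IsLocalization.isNoetherianRing S (Localization S) ‹_›
  haveI : Nontrivial (LocalizedModule S M) := hp
  obtain ⟨P, hP⟩ :=
    associatedPrimes.nonempty (Localization S) (LocalizedModule S M)
  obtain ⟨hPprime, z, hz⟩ := isAssociatedPrime_iff.mp hP
  induction z using LocalizedModule.induction_on with
  | _ x s =>
  set q : Ideal R := P.comap (algebraMap R (Localization S)) with hq
  have hqprime : q.IsPrime := Ideal.IsPrime.comap _
  have hqle : q ≤ p.asIdeal := by
    intro r hr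
    by_contra hrp
    have hunit : IsUnit (algebraMap R (Localization S) r) :=
      IsLocalization.map_units (Localization S) (⟨r, hrp⟩ : S)
    exact hPprime.ne_top (Ideal.eq_top_of_isUnit_mem _ hr hunit)
  have hmem : ∀ r : R, r ∈ q ↔ ∃ c : S, (c : R) • r • x = 0 := by
    intro r
    rw [hq, Ideal.mem_comap, hz, Submodule.mem_colon_singleton, Submodule.mem_bot,
      algebraMap_smul, LocalizedModule.smul'_mk, ← LocalizedModule.zero_mk (1 : S),
      LocalizedModule.mk_eq]
    constructor
    · rintro ⟨c, hc⟩
      exact ⟨c, by simpa [Submonoid.smul_def] using hc⟩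
    · rintro ⟨c, hc⟩
      exact ⟨c, by simpa [Submonoid.smul_def] using hc⟩
  obtain ⟨T, hT⟩ : q.FG := IsNoetherian.noetherian q
  choose c hc using fun (r : T) => (hmem r).mp (hT ▸ Ideal.subset_span r.2)
  set t : R := ∏ r ∈ T.attach, (c r : R) with ht
  have htS : t ∈ S := Submonoid.prod_mem S (fun r _ => (c r).2)
  refine ⟨q, isAssociatedPrime_iff.mpr ⟨hqprime, t • x, ?_⟩, hqle⟩
  apply le_antisymm
  · rw [← hT, Ideal.span_le]
    intro r hr
    rw [SetLike.mem_coe, Submodule.mem_colon_singleton, Submodule.mem_bot]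
    obtain ⟨d, hd⟩ := Finset.dvd_prod_of_mem (fun r => (c r : R))
      (Finset.mem_attach T ⟨r, hr⟩)
    rw [smul_smul, ht, hd, show r * ((c ⟨r, hr⟩ : R) * d) = d * ((c ⟨r, hr⟩ : R) * r) by ring,
      mul_smul, mul_smul]
    rw [hc ⟨r, hr⟩]
    simp
  · intro r hr
    rw [Submodule.mem_colon_singleton, Submodule.mem_bot] at hr
    exact (hmem r).mpr ⟨⟨t, htS⟩, by rwa [smul_comm] at hr⟩

end Aux

/-- Over a commutative noetherian ring `R`: (a) for a specialization-closed subset `S` of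
`Spec R` and a finitely generated module `M`, `Ass M ⊆ S` iff `Supp M ⊆ S`; and (b) for a
Serre subcategory `P` of `mod R` (an isomorphism-invariant predicate on finitely
generated modules closed under submodules, quotient modules and extensions), the union of
`Ass M` over `M` in `P` equals the union of `Supp M` over `M` in `P`. -/
theorem ass_and_supp_agree
    (R : Type u) [CommRing R] [IsNoetherianRing R] :
    (∀ S : Set (PrimeSpectrum R),
      (∀ p q : PrimeSpectrum R, p ∈ S → p.asIdeal ≤ q.asIdeal → q ∈ S) →
      ∀ (M : Type u) [AddCommGroup M] [Module R M] [Module.Finite R M],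
        ({p : PrimeSpectrum R | p.asIdeal ∈ associatedPrimes R M} ⊆ S ↔
          Module.support R M ⊆ S)) ∧
    (∀ P : ModuleCat.{u} R → Prop,
      (∀ M : ModuleCat.{u} R, P M → Module.Finite R M) →
      (∀ M N : ModuleCat.{u} R, Module.Finite R M → Module.Finite R N →
        (M ≃ₗ[R] N) → P M → P N) →
      (∀ (M : ModuleCat.{u} R) (N : Submodule R M), Module.Finite R M →
        P M → P (ModuleCat.of R N)) →
      (∀ (M : ModuleCat.{u} R) (N : Submodule R M), Module.Finite R M →
        P M → P (ModuleCat.of R (M ⧸ N))) →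
      (∀ (A B C : ModuleCat.{u} R) (f : A →ₗ[R] B) (g : B →ₗ[R] C),
        Module.Finite R A → Module.Finite R B → Module.Finite R C →
        Function.Injective f → Function.Surjective g →
        LinearMap.range f = LinearMap.ker g → P A → P C → P B) →
      (⋃ (M : ModuleCat.{u} R) (_ : P M),
          {p : PrimeSpectrum R | p.asIdeal ∈ associatedPrimes R (M : Type u)}) =
        ⋃ (M : ModuleCat.{u} R) (_ : P M), Module.support R M) := by
  constructor
  · intro S hS M _ _ _
    constructor
    · intro hAss p hp
      obtain ⟨q, hq, hqle⟩ := my_exists_ass_le hp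
      exact hS ⟨q, hq.isPrime⟩ p (hAss hq) hqle
    · intro hSupp p hp
      exact hSupp (my_ass_mem_supp hp)
  · intro P hfin hiso hsub hquot _hext
    apply subset_antisymm
    · exact Set.iUnion₂_mono fun M _ p hp => my_ass_mem_supp hp
    · intro p hp
      simp only [Set.mem_iUnion] at hp ⊢
      obtain ⟨M, hM, hpM⟩ := hp
      haveI : Module.Finite R M := hfin M hM
      haveI : IsNoetherian R M := isNoetherian_of_isNoetherianRing_of_finite R M
      obtain ⟨q, hq', hqle⟩ := my_exists_ass_le hpM
      obtain ⟨hqprime, x, hx⟩ := isAssociatedPrime_iff.mp hq'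
      set φ : R →ₗ[R] M := LinearMap.toSpanSingleton R M x with hφ
      have hker : LinearMap.ker φ = q := by
        ext r
        rw [LinearMap.mem_ker, hx, Submodule.mem_colon_singleton, Submodule.mem_bot]
        rfl
      have h1 : P (ModuleCat.of R (LinearMap.range φ)) := by
        rw [← LinearMap.span_singleton_eq_range]
        exact hsub M _ ‹_› hM
      -- the surjection onto R ⧸ p
      have hle : LinearMap.ker φ ≤ Submodule.comap LinearMap.id (p.asIdeal : Submodule R R) := by
        rw [hker]; exact hqle
      set ψ : ↥(LinearMap.range φ) →ₗ[R] R ⧸ (p.asIdeal : Submodule R R) :=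
        (Submodule.mapQ (LinearMap.ker φ) (p.asIdeal : Submodule R R) LinearMap.id hle) ∘ₗ
          (φ.quotKerEquivRange.symm : ↥(LinearMap.range φ) →ₗ[R] R ⧸ LinearMap.ker φ) with hψ
      have hsurj : Function.Surjective ψ := by
        intro y
        obtain ⟨r, rfl⟩ := Submodule.Quotient.mk_surjective _ y
        refine ⟨φ.quotKerEquivRange (Submodule.Quotient.mk r), ?_⟩
        rw [hψ]
        simp only [LinearMap.coe_comp, LinearEquiv.coe_coe, Function.comp_apply,
          LinearEquiv.symm_apply_apply]
        rfl
      haveI : Module.Finite R ↥(LinearMap.range φ) := Module.Finite.of_surjective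
        φ.rangeRestrict (LinearMap.surjective_rangeRestrict φ)
      have h2 : P (ModuleCat.of R (↥(LinearMap.range φ) ⧸ LinearMap.ker ψ)) :=
        hquot (ModuleCat.of R (LinearMap.range φ)) (LinearMap.ker ψ) ‹_› h1
      have e : (↥(LinearMap.range φ) ⧸ LinearMap.ker ψ) ≃ₗ[R] R ⧸ (p.asIdeal : Submodule R R) :=
        ψ.quotKerEquivOfSurjective hsurj
      haveI : Module.Finite R (↥(LinearMap.range φ) ⧸ LinearMap.ker ψ) :=
        Module.Finite.of_surjective (LinearMap.ker ψ).mkQ (Submodule.mkQ_surjective _)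
      have h3 : P (ModuleCat.of R (R ⧸ p.asIdeal)) :=
        hiso (ModuleCat.of R (↥(LinearMap.range φ) ⧸ LinearMap.ker ψ))
          (ModuleCat.of R (R ⧸ p.asIdeal)) ‹_› (inferInstanceAs (Module.Finite R (R ⧸ p.asIdeal))) e h2
      refine ⟨ModuleCat.of R (R ⧸ p.asIdeal), h3, ?_⟩
      refine isAssociatedPrime_iff.mpr ⟨p.isPrime, Submodule.Quotient.mk 1, ?_⟩
      ext r
      rw [Submodule.mem_colon_singleton, Submodule.mem_bot, ← Submodule.Quotient.mk_smul,
        smul_eq_mul, mul_one, Submodule.Quotient.mk_eq_zero]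
end

section
/- Let R be a commutative noetherian ring, and let P be an isomorphism-invariant predicate on finitely generated R-modules that is closed under finite direct sums, kernels and cokernels. Then P is closed under submodules and under quotient modules. -/
universe u

set_option maxHeartbeats 1000000 in
/-- Key lemma: if `A` is a finitely generated module killed by a prime `p`, and `x : A`
has annihilator contained in `p`, then there is a linear functional `A → R/p` not
vanishing at `x`. -/
lemma exists_hom_to_quotient_prime {R : Type u} [CommRing R]
    (p : Ideal R) [p.IsPrime] (A : Type u) [AddCommGroup A] [Module R A] [Module.Finite R A]
    (hA : Module.IsTorsionBySet R A (p : Set R)) (x : A) (hx : ∀ r : R, r • x = 0 → r ∈ p) :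
    ∃ φ : A →ₗ[R] R ⧸ p, φ x ≠ 0 := by
  classical
  letI : Module (R ⧸ p) A := hA.module
  haveI : IsScalarTower R (R ⧸ p) A := hA.isScalarTower
  haveI : Module.Finite (R ⧸ p) A := Module.Finite.of_restrictScalars_finite R (R ⧸ p) A
  set D := R ⧸ p with hD
  let K := FractionRing D
  let L := LocalizedModule (nonZeroDivisors D) A
  let μ : A →ₗ[D] L := LocalizedModule.mkLinearMap (nonZeroDivisors D) A
  have hμx : μ x ≠ 0 := by
    intro h0
    obtain ⟨s, hs⟩ := (IsLocalizedModule.eq_zero_iff (nonZeroDivisors D) μ).mp h0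
    obtain ⟨r, hr⟩ := Ideal.Quotient.mk_surjective (s : D)
    have : (Ideal.Quotient.mk p r) • x = 0 := by rw [hr]; exact hs
    rw [hA.mk_smul] at this
    have hrp : r ∈ p := hx r this
    have : (s : D) = 0 := by rw [← hr, Ideal.Quotient.eq_zero_iff_mem]; exact hrp
    exact nonZeroDivisors.ne_zero s.2 this
  obtain ⟨lam, hlam⟩ : ∃ lam : Module.Dual K L, lam (μ x) ≠ 0 := by
    by_contra h
    push_neg at h
    exact hμx ((Module.forall_dual_apply_eq_zero_iff K _).mp h)
  let φ₀ : A →ₗ[D] K := (lam.restrictScalars D).comp μ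
  have hφ₀x : φ₀ x ≠ 0 := hlam
  obtain ⟨t, ht⟩ := Module.Finite.fg_top (R := D) (M := A)
  obtain ⟨b, hb⟩ :=
    IsLocalization.exist_integer_multiples_of_finset (nonZeroDivisors D) (t.image φ₀)
  let ψ' : A →ₗ[D] K := (b : D) • φ₀
  have hmem : ∀ a : A, ψ' a ∈ LinearMap.range (Algebra.linearMap D K) := by
    have hle : (⊤ : Submodule D A) ≤
        Submodule.comap ψ' (LinearMap.range (Algebra.linearMap D K)) := by
      rw [← ht, Submodule.span_le]
      intro a ha
      obtain ⟨c, hc⟩ := hb (φ₀ a) (Finset.mem_image_of_mem φ₀ ha)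
      exact ⟨c, hc⟩
    intro a
    exact hle trivial
  have hψ'x : ψ' x ≠ 0 := by
    intro h
    have h' : ((b : D)) • φ₀ x = 0 := h
    rw [Algebra.smul_def] at h'
    rcases mul_eq_zero.mp h' with h'' | h''
    · exact nonZeroDivisors.ne_zero b.2 (IsFractionRing.injective D K (by simpa using h''))
    · exact hφ₀x h''
  have hinj : Function.Injective (Algebra.linearMap D K) := IsFractionRing.injective D K
  let e : D ≃ₗ[D] LinearMap.range (Algebra.linearMap D K) :=
    LinearEquiv.ofInjective (Algebra.linearMap D K) hinj
  let ψ : A →ₗ[D] D := e.symm.toLinearMap.comp (ψ'.codRestrict _ hmem)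
  have hψx : ψ x ≠ 0 := by
    intro h
    apply hψ'x
    have h2 : (ψ'.codRestrict _ hmem) x = e 0 := by
      rw [← h]; exact (e.apply_symm_apply _).symm
    have h3 : ψ' x = ((e 0 : _) : K) := by
      rw [← h2]; rfl
    rw [LinearEquiv.ofInjective_apply, map_zero] at h3
    exact h3
  exact ⟨ψ.restrictScalars R, hψx⟩

/-- Over a commutative noetherian ring, an isomorphism-invariant predicate on finitely
generated modules closed under finite direct sums, kernels and cokernels is closed under
submodules and quotient modules. -/
theorem closed_under_sums_kernels_cokernels_implies_sub_quot
    (R : Type u) [CommRing R] [IsNoetherianRing R]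
    (P : ∀ (M : Type u) [AddCommGroup M] [Module R M], Prop)
    (hiso : ∀ (M N : Type u) [AddCommGroup M] [Module R M] [AddCommGroup N] [Module R N]
      [Module.Finite R M] [Module.Finite R N], (M ≃ₗ[R] N) → P M → P N)
    (hsum : ∀ (M N : Type u) [AddCommGroup M] [Module R M] [AddCommGroup N] [Module R N]
      [Module.Finite R M] [Module.Finite R N], P M → P N → P (M × N))
    (hker : ∀ (M N : Type u) [AddCommGroup M] [Module R M] [AddCommGroup N] [Module R N]
      [Module.Finite R M] [Module.Finite R N] (f : M →ₗ[R] N),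
      P M → P N → P (LinearMap.ker f))
    (hcoker : ∀ (M N : Type u) [AddCommGroup M] [Module R M] [AddCommGroup N] [Module R N]
      [Module.Finite R M] [Module.Finite R N] (f : M →ₗ[R] N),
      P M → P N → P (N ⧸ LinearMap.range f)) :
    (∀ (M : Type u) [AddCommGroup M] [Module R M] [Module.Finite R M]
      (N : Submodule R M), P M → P N) ∧
    (∀ (M : Type u) [AddCommGroup M] [Module R M] [Module.Finite R M]
      (N : Submodule R M), P M → P (M ⧸ N)) := by
  classical
  -- closure under finite powers
  have hpi : ∀ (B : Type u) [AddCommGroup B] [Module R B] [Module.Finite R B], P B →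
      ∀ n : ℕ, P (Fin n → B) := by
    intro B _ _ _ hB n
    induction n with
    | zero =>
      have h0 : P ↥(LinearMap.ker (LinearMap.id : B →ₗ[R] B)) := hker B B LinearMap.id hB hB
      haveI : Subsingleton ↥(LinearMap.ker (LinearMap.id : B →ₗ[R] B)) := by
        rw [LinearMap.ker_id]
        infer_instance
      refine hiso _ _ (LinearEquiv.ofLinear 0 0 ?_ ?_) h0 <;>
        · apply LinearMap.ext; intro z; exact Subsingleton.elim _ _
    | succ n ih =>
      have hprod := hsum B (Fin n → B) hB ih
      refine hiso _ _ (LinearEquiv.ofLinear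
        (LinearMap.pi (fun i => Fin.cases (LinearMap.fst R B (Fin n → B))
          (fun j => (LinearMap.proj j).comp (LinearMap.snd R B (Fin n → B))) i))
        (LinearMap.prod (LinearMap.proj 0)
          (LinearMap.pi fun j => LinearMap.proj j.succ)) ?_ ?_) hprod
      · apply LinearMap.ext; intro z; funext i
        refine Fin.cases ?_ (fun j => ?_) i <;> simp [LinearMap.pi_apply]
      · apply LinearMap.ext; intro z
        refine Prod.ext ?_ ?_
        · simp [LinearMap.pi_apply]
        · funext j; simp [LinearMap.pi_apply]
  -- main induction: quotients
  have main : ∀ (M : Type u) [AddCommGroup M] [Module R M] [Module.Finite R M], P M →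
      ∀ N₀ : Submodule R M, P (M ⧸ N₀) → ∀ N : Submodule R M, N₀ ≤ N → P (M ⧸ N) := by
    intro M _ _ _ hPM N₀
    have wf : WellFounded ((· > ·) : Submodule R M → Submodule R M → Prop) :=
      IsNoetherian.wf inferInstance
    induction N₀ using WellFounded.induction wf with
    | _ N₀ IH =>
    intro hP0 N hN
    rcases eq_or_lt_of_le hN with rfl | hlt
    · exact hP0
    · -- the submodule `N'` = image of `N` in `M ⧸ N₀` is nonzero
      let N' : Submodule R (M ⧸ N₀) := N.map N₀.mkQ
      have hN'ne : N' ≠ ⊥ := by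
        intro h
        apply hlt.ne
        apply le_antisymm hN
        intro y hy
        have hy' : N₀.mkQ y ∈ N' := Submodule.mem_map_of_mem hy
        rw [h, Submodule.mem_bot] at hy'
        rwa [← Submodule.ker_mkQ (p := N₀), LinearMap.mem_ker]
      haveI : Nontrivial ↥N' := Submodule.nontrivial_iff_ne_bot.mpr hN'ne
      haveI : IsNoetherian R (M ⧸ N₀) := inferInstance
      haveI : Module.Finite R ↥N' := Module.Finite.iff_fg.mpr (IsNoetherian.noetherian N')
      -- an associated prime of N'
      obtain ⟨p, pprime, y, hy⟩ : ∃ p : Ideal R, p.IsPrime ∧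
          ∃ y : ↥N', p = (Submodule.span R {y}).annihilator := by
        obtain ⟨p, hp⟩ := associatedPrimes.nonempty R ↥N'
        obtain ⟨hpr, y, hy⟩ := isAssociatedPrime_iff.mp hp
        refine ⟨p, hpr, y, ?_⟩
        rw [hy]; ext r
        rw [Submodule.mem_colon_singleton, Submodule.mem_bot, Submodule.mem_annihilator_span_singleton]
      haveI : p.IsPrime := pprime
      set x : M ⧸ N₀ := (y : M ⧸ N₀) with hxdef
      have hx : ∀ r : R, r • x = 0 ↔ r ∈ p := by
        intro r
        rw [hy, Submodule.mem_annihilator_span_singleton]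
        constructor
        · intro h
          exact Subtype.ext h
        · intro h
          exact congrArg Subtype.val h
      have hxN' : x ∈ N' := y.2
      -- generators of p
      obtain ⟨n, v, hv⟩ := Submodule.fg_iff_exists_fin_generating_family.mp
        (IsNoetherian.noetherian p)
      let g : (M ⧸ N₀) →ₗ[R] (Fin n → M ⧸ N₀) := LinearMap.pi fun i => v i • LinearMap.id
      have hgmem : ∀ z : M ⧸ N₀, z ∈ LinearMap.ker g ↔ ∀ i, v i • z = 0 := by
        intro z
        rw [LinearMap.mem_ker]
        constructor
        · intro h i
          exact congrFun h i
        · intro h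
          funext i
          exact h i
      have hPA : P ↥(LinearMap.ker g) :=
        hker (M ⧸ N₀) (Fin n → M ⧸ N₀) g hP0 (hpi (M ⧸ N₀) hP0 n)
      haveI : Module.Finite R ↥(LinearMap.ker g) :=
        Module.Finite.iff_fg.mpr (IsNoetherian.noetherian _)
      have hann : ∀ z : M ⧸ N₀, z ∈ LinearMap.ker g → ∀ r ∈ p, r • z = 0 := by
        intro z hz r hr
        have hple : p ≤ (Submodule.span R {z}).annihilator := by
          rw [← hv, Submodule.span_le]
          rintro _ ⟨i, rfl⟩
          rw [SetLike.mem_coe, Submodule.mem_annihilator_span_singleton]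
          exact (hgmem z).mp hz i
        rw [← Submodule.mem_annihilator_span_singleton]
        exact hple hr
      have hxker : x ∈ LinearMap.ker g := by
        rw [hgmem]
        intro i
        rw [hx]
        rw [← hv]
        exact Submodule.subset_span ⟨i, rfl⟩
      set xA : ↥(LinearMap.ker g) := ⟨x, hxker⟩ with hxA
      have htor : Module.IsTorsionBySet R ↥(LinearMap.ker g) (p : Set R) := by
        intro a r
        apply Subtype.ext
        have := hann (a : M ⧸ N₀) a.2 (r : R) r.2
        simpa using this
      have hxann : ∀ r : R, r • xA = 0 → r ∈ p := by
        intro r h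
        rw [← hx]
        exact congrArg Subtype.val h
      obtain ⟨φ, hφ⟩ := exists_hom_to_quotient_prime p ↥(LinearMap.ker g) htor xA hxann
      -- the map `R ⧸ p → M ⧸ N₀` sending `1` to `x`
      have hker_span : p ≤ LinearMap.ker (LinearMap.toSpanSingleton R (M ⧸ N₀) x) := by
        intro r hr
        rw [LinearMap.mem_ker, LinearMap.toSpanSingleton_apply]
        exact (hx r).mpr hr
      let ι : (R ⧸ p) →ₗ[R] M ⧸ N₀ := p.liftQ (LinearMap.toSpanSingleton R (M ⧸ N₀) x) hker_span
      have hι : Function.Injective ι := by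
        rw [← LinearMap.ker_eq_bot]
        apply Submodule.ker_liftQ_eq_bot
        intro r hr
        rw [LinearMap.mem_ker, LinearMap.toSpanSingleton_apply] at hr
        exact (hx r).mp hr
      let f : ↥(LinearMap.ker g) →ₗ[R] M ⧸ N₀ := ι.comp φ
      have hf : f xA ≠ 0 := by
        intro h
        apply hφ
        apply hι
        rw [map_zero]
        exact h
      have hrange_ne : LinearMap.range f ≠ ⊥ := by
        intro h
        apply hf
        have : f xA ∈ LinearMap.range f := LinearMap.mem_range_self f xA
        rwa [h, Submodule.mem_bot] at this
      have hrange_le : LinearMap.range f ≤ N' := by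
        rintro _ ⟨a, rfl⟩
        show ι (φ a) ∈ N'
        obtain ⟨r, hr⟩ := Submodule.Quotient.mk_surjective p (φ a)
        have heq : ι (Submodule.Quotient.mk r) = r • x := by
          show p.liftQ _ hker_span (Submodule.Quotient.mk r) = r • x
          rw [Submodule.liftQ_apply, LinearMap.toSpanSingleton_apply]
        rw [← hr, heq]
        exact Submodule.smul_mem N' r hxN'
      have hPcoker : P ((M ⧸ N₀) ⧸ LinearMap.range f) :=
        hcoker ↥(LinearMap.ker g) (M ⧸ N₀) f hPA hP0
      -- pull back to a submodule of M
      let N₁ : Submodule R M := (LinearMap.range f).comap N₀.mkQ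
      have hmap : N₁.map N₀.mkQ = LinearMap.range f := by
        rw [Submodule.map_comap_eq, Submodule.range_mkQ, top_inf_eq]
      have h01 : N₀ < N₁ := by
        constructor
        · intro z hz
          show N₀.mkQ z ∈ LinearMap.range f
          have : N₀.mkQ z = 0 := by
            rwa [← LinearMap.mem_ker, Submodule.ker_mkQ]
          rw [this]
          exact Submodule.zero_mem _
        · intro hle
          apply hrange_ne
          rw [← hmap]
          apply le_bot_iff.mp
          rintro _ ⟨z, hz, rfl⟩
          have : z ∈ N₀ := hle hz
          rw [Submodule.mem_bot]
          rwa [← LinearMap.mem_ker, Submodule.ker_mkQ]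
      have hN₁N : N₁ ≤ N := by
        intro z hz
        have hz' : N₀.mkQ z ∈ N' := hrange_le hz
        obtain ⟨w, hwN, hw⟩ := hz'
        have : z - w ∈ N₀ := by
          rw [← Submodule.ker_mkQ (p := N₀), LinearMap.mem_ker, map_sub, hw, sub_self]
        have hzw : z - w ∈ N := hN this
        have := N.add_mem hzw hwN
        simpa using this
      have hPN₁ : P (M ⧸ N₁) := by
        rw [← hmap] at hPcoker
        exact hiso _ _ (Submodule.quotientQuotientEquivQuotient N₀ N₁ h01.le) hPcoker
      exact IH N₁ h01 hPN₁ N hN₁N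
  have key : ∀ (M : Type u) [AddCommGroup M] [Module R M] [Module.Finite R M]
      (N : Submodule R M), P M → P (M ⧸ N) := by
    intro M _ _ _ N hPM
    refine main M hPM ⊥ ?_ N bot_le
    exact hiso M (M ⧸ (⊥ : Submodule R M)) (Submodule.quotEquivOfEqBot ⊥ rfl).symm hPM
  refine ⟨?_, key⟩
  intro M _ _ _ N hPM
  have h1 := hker M (M ⧸ N) N.mkQ hPM (key M N hPM)
  rwa [Submodule.ker_mkQ] at h1
end

section
/- Let R be a commutative noetherian ring and let P be an isomorphism-invariant predicate on finitely generated R-modules that is closed under submodules and extensions. Let M be a nonzero finitely generated R-module whose set of associated primes is a single prime {p}. If P (R/p) holds, then P M holds. -/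
universe u

section Aux

variable (R : Type u) [CommRing R] [IsNoetherianRing R]
variable (P : ∀ (M : Type u) [AddCommGroup M] [Module R M], Prop)

/-- `P` holds for any subsingleton module, given closure under iso and submodules and one
module satisfying `P`. -/
theorem pAux_subsingleton
    (hiso : ∀ (M N : Type u) [AddCommGroup M] [Module R M] [AddCommGroup N] [Module R N]
      [Module.Finite R M] [Module.Finite R N], (M ≃ₗ[R] N) → P M → P N)
    (hsub : ∀ (M : Type u) [AddCommGroup M] [Module R M] [Module.Finite R M]
      (N : Submodule R M), P M → P N)
    (p : Ideal R) (hRp : P (R ⧸ p))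
    (M : Type u) [AddCommGroup M] [Module R M] [Subsingleton M] : P M := by
  haveI : Module.Finite R M := Module.Finite.of_surjective (0 : R →ₗ[R] M)
    (fun x => ⟨0, Subsingleton.elim _ _⟩)
  have h0 : P ↥(⊥ : Submodule R (R ⧸ p)) := hsub (R ⧸ p) ⊥ hRp
  refine hiso _ M ?_ h0
  exact
    { toFun := fun _ => 0
      invFun := fun _ => 0
      map_add' := by intros; simp
      map_smul' := by intros; simp
      left_inv := fun x => Subsingleton.elim _ _
      right_inv := fun x => Subsingleton.elim _ _ }

/-- Key dévissage lemma A: if `p` is prime, `p` kills `N`, elements outside `p` act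
injectively on `N`, and `N` is generated by `k` elements, then `P N`. -/
theorem pAux_span
    (hiso : ∀ (M N : Type u) [AddCommGroup M] [Module R M] [AddCommGroup N] [Module R N]
      [Module.Finite R M] [Module.Finite R N], (M ≃ₗ[R] N) → P M → P N)
    (hsub : ∀ (M : Type u) [AddCommGroup M] [Module R M] [Module.Finite R M]
      (N : Submodule R M), P M → P N)
    (hext : ∀ (A B C : Type u) [AddCommGroup A] [Module R A] [AddCommGroup B] [Module R B]
      [AddCommGroup C] [Module R C] [Module.Finite R A] [Module.Finite R B]
      [Module.Finite R C] (f : A →ₗ[R] B) (g : B →ₗ[R] C),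
      Function.Injective f → Function.Surjective g → LinearMap.range f = LinearMap.ker g →
      P A → P C → P B)
    (p : Ideal R) (hp : p.IsPrime) (hRp : P (R ⧸ p)) (k : ℕ) :
    ∀ (N : Type u) [AddCommGroup N] [Module R N] [Module.Finite R N],
      (∀ r ∈ p, ∀ x : N, r • x = 0) →
      (∀ s ∉ p, ∀ x : N, s • x = 0 → x = 0) →
      ∀ v : Fin k → N, Submodule.span R (Set.range v) = ⊤ → P N := by
  have hone : (1 : R) ∉ p := fun h => hp.ne_top ((Ideal.eq_top_iff_one p).mpr h)
  induction k with
  | zero =>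
    intro N _ _ _ hkill hreg v hv
    rw [Set.range_eq_empty, Submodule.span_empty] at hv
    haveI : Subsingleton N := by
      refine ⟨fun a b => ?_⟩
      have ha : a ∈ (⊥ : Submodule R N) := hv ▸ Submodule.mem_top
      have hb : b ∈ (⊥ : Submodule R N) := hv ▸ Submodule.mem_top
      rw [Submodule.mem_bot] at ha hb
      rw [ha, hb]
    exact pAux_subsingleton R P hiso hsub p hRp N
  | succ k IH =>
    intro N _ _ _ hkill hreg v hv
    classical
    haveI : IsNoetherian R N := inferInstance
    set x0 := v 0 with hx0def
    let N' : Submodule R N :=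
      { carrier := {y | ∃ s, s ∉ p ∧ s • y ∈ Submodule.span R {x0}}
        add_mem' := by
          rintro a b ⟨s, hs, hsa⟩ ⟨t, ht, htb⟩
          refine ⟨s * t, fun h => ((hp.mem_or_mem h).elim hs ht), ?_⟩
          rw [smul_add]
          refine Submodule.add_mem _ ?_ ?_
          · rw [mul_comm, mul_smul]; exact Submodule.smul_mem _ t hsa
          · rw [mul_smul]; exact Submodule.smul_mem _ s htb
        zero_mem' := ⟨1, hone, by simp⟩
        smul_mem' := by
          rintro c y ⟨s, hs, hsy⟩
          exact ⟨s, hs, by rw [smul_comm]; exact Submodule.smul_mem _ c hsy⟩ }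
    have hmem : ∀ y : N, y ∈ N' ↔ ∃ s, s ∉ p ∧ s • y ∈ Submodule.span R {x0} :=
      fun y => Iff.rfl
    -- the quotient
    have hkillQ : ∀ r ∈ p, ∀ x : N ⧸ N', r • x = 0 := by
      intro r hr x
      obtain ⟨y, rfl⟩ := N'.mkQ_surjective x
      rw [← map_smul, hkill r hr y, map_zero]
    have hregQ : ∀ s ∉ p, ∀ x : N ⧸ N', s • x = 0 → x = 0 := by
      intro s hs x hsx
      obtain ⟨y, rfl⟩ := N'.mkQ_surjective x
      rw [← map_smul] at hsx
      have h1 : s • y ∈ N' := by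
        rwa [← LinearMap.mem_ker, Submodule.ker_mkQ] at hsx
      obtain ⟨t, ht, hts⟩ := (hmem _).mp h1
      have h2 : y ∈ N' := (hmem y).mpr
        ⟨t * s, fun h => ((hp.mem_or_mem h).elim ht hs), by rwa [mul_smul]⟩
      rw [← LinearMap.mem_ker, Submodule.ker_mkQ]
      exact h2
    have hmk0 : N'.mkQ x0 = 0 := by
      rw [← LinearMap.mem_ker, Submodule.ker_mkQ]
      exact (hmem x0).mpr ⟨1, hone, by simp [Submodule.mem_span_singleton_self]⟩
    have hvQ : Submodule.span R (Set.range fun i : Fin k => N'.mkQ (v i.succ)) = ⊤ := by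
      have htop : Submodule.map N'.mkQ (Submodule.span R (Set.range v)) = ⊤ := by
        rw [hv, Submodule.map_top, Submodule.range_mkQ]
      rw [Submodule.map_span] at htop
      rw [eq_top_iff, ← htop]
      have himg : N'.mkQ '' Set.range v ⊆
          insert (0 : N ⧸ N') (Set.range fun i : Fin k => N'.mkQ (v i.succ)) := by
        rintro _ ⟨_, ⟨i, rfl⟩, rfl⟩
        refine Fin.cases ?_ (fun j => ?_) i
        · exact Set.mem_insert_iff.mpr (Or.inl hmk0)
        · exact Set.mem_insert_iff.mpr (Or.inr ⟨j, rfl⟩)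
      refine (Submodule.span_mono himg).trans ?_
      rw [Submodule.span_insert_zero]
    have PQ : P (N ⧸ N') := IH (N ⧸ N') hkillQ hregQ _ hvQ
    -- P of span of x0
    have PSx : P ↥(Submodule.span R {x0}) := by
      by_cases hx00 : x0 = 0
      · haveI : Subsingleton ↥(Submodule.span R {x0}) := by
          refine ⟨fun a b => ?_⟩
          obtain ⟨ca, hca⟩ := Submodule.mem_span_singleton.mp a.2
          obtain ⟨cb, hcb⟩ := Submodule.mem_span_singleton.mp b.2
          ext
          rw [← hca, ← hcb, hx00, smul_zero, smul_zero]
        exact pAux_subsingleton R P hiso hsub p hRp _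
      · have hker : LinearMap.ker (LinearMap.toSpanSingleton R N x0) = p := by
          ext r
          rw [LinearMap.mem_ker, LinearMap.toSpanSingleton_apply]
          constructor
          · intro h
            by_contra hrp
            exact hx00 (hreg r hrp x0 h)
          · intro h
            exact hkill r h x0
        have e : (R ⧸ p) ≃ₗ[R] ↥(Submodule.span R {x0}) :=
          (Submodule.quotEquivOfEq p _ hker.symm).trans
            ((LinearMap.toSpanSingleton R N x0).quotKerEquivRange.trans
              (LinearEquiv.ofEq _ _ (LinearMap.span_singleton_eq_range R N x0).symm))
        exact hiso _ _ e hRp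
    -- P of N'
    obtain ⟨S, hS⟩ := IsNoetherian.noetherian N'
    let σ : N → R := fun y =>
      if h : ∃ s, s ∉ p ∧ s • y ∈ Submodule.span R {x0} then h.choose else 1
    have hσ1 : ∀ y : N, σ y ∉ p := by
      intro y
      by_cases h : ∃ s, s ∉ p ∧ s • y ∈ Submodule.span R {x0}
      · simp only [σ, dif_pos h]; exact h.choose_spec.1
      · simp only [σ, dif_neg h]; exact hone
    have hσ2 : ∀ y ∈ N', σ y • y ∈ Submodule.span R {x0} := by
      intro y hy
      have h := (hmem y).mp hy
      simp only [σ, dif_pos h]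
      exact h.choose_spec.2
    set t : R := ∏ y ∈ S, σ y with htdef
    have ht : t ∉ p :=
      Finset.prod_induction σ (· ∉ p) (fun a b ha hb h => (hp.mem_or_mem h).elim ha hb)
        hone (fun y _ => hσ1 y)
    have hts : ∀ y ∈ N', t • y ∈ Submodule.span R {x0} := by
      intro y hy
      rw [← hS] at hy
      induction hy using Submodule.span_induction with
      | mem z hz =>
        have hz' : z ∈ N' := hS ▸ Submodule.subset_span hz
        rw [htdef, ← Finset.mul_prod_erase S σ hz, mul_comm, mul_smul]
        exact Submodule.smul_mem _ _ (hσ2 z hz')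
      | zero => rw [smul_zero]; exact Submodule.zero_mem _
      | add a b _ _ iha ihb =>
        rw [smul_add]; exact Submodule.add_mem _ iha ihb
      | smul c a _ iha =>
        rw [smul_comm]; exact Submodule.smul_mem _ c iha
    let φ : ↥N' →ₗ[R] ↥(Submodule.span R {x0}) :=
      LinearMap.codRestrict _ (t • N'.subtype) (fun y => by
        simpa using hts (y : N) y.2)
    have hφ : Function.Injective φ := by
      intro a b hab
      have h1 : t • (a : N) = t • (b : N) := congrArg Subtype.val hab
      have h2 : t • ((a : N) - (b : N)) = 0 := by rw [smul_sub, h1, sub_self]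
      exact Subtype.ext (sub_eq_zero.mp (hreg t ht _ h2))
    have PN' : P ↥N' :=
      hiso _ _ (LinearEquiv.ofInjective φ hφ).symm (hsub _ (LinearMap.range φ) PSx)
    exact hext ↥N' N (N ⧸ N') N'.subtype N'.mkQ N'.injective_subtype N'.mkQ_surjective
      (by rw [Submodule.range_subtype, Submodule.ker_mkQ]) PN' PQ

/-- Dévissage lemma B: if `p` is prime, `p ^ n` kills `M` and elements outside `p` act
injectively on `M`, then `P M`. -/
theorem pAux_pow
    (hiso : ∀ (M N : Type u) [AddCommGroup M] [Module R M] [AddCommGroup N] [Module R N]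
      [Module.Finite R M] [Module.Finite R N], (M ≃ₗ[R] N) → P M → P N)
    (hsub : ∀ (M : Type u) [AddCommGroup M] [Module R M] [Module.Finite R M]
      (N : Submodule R M), P M → P N)
    (hext : ∀ (A B C : Type u) [AddCommGroup A] [Module R A] [AddCommGroup B] [Module R B]
      [AddCommGroup C] [Module R C] [Module.Finite R A] [Module.Finite R B]
      [Module.Finite R C] (f : A →ₗ[R] B) (g : B →ₗ[R] C),
      Function.Injective f → Function.Surjective g → LinearMap.range f = LinearMap.ker g →
      P A → P C → P B)
    (p : Ideal R) (hp : p.IsPrime) (hRp : P (R ⧸ p)) (n : ℕ) :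
    ∀ (M : Type u) [AddCommGroup M] [Module R M] [Module.Finite R M],
      (∀ r ∈ p ^ n, ∀ x : M, r • x = 0) →
      (∀ s ∉ p, ∀ x : M, s • x = 0 → x = 0) → P M := by
  induction n with
  | zero =>
    intro M _ _ _ hkill hreg
    haveI : Subsingleton M := by
      refine ⟨fun a b => ?_⟩
      have ha := hkill 1 (by rw [pow_zero, Ideal.one_eq_top]; trivial) a
      have hb := hkill 1 (by rw [pow_zero, Ideal.one_eq_top]; trivial) b
      rw [one_smul] at ha hb
      rw [ha, hb]
    exact pAux_subsingleton R P hiso hsub p hRp M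
  | succ n IH =>
    intro M _ _ _ hkill hreg
    haveI : IsNoetherian R M := inferInstance
    let T : Submodule R M :=
      { carrier := {x | ∀ r ∈ p, r • x = 0}
        add_mem' := by
          intro a b ha hb r hr
          rw [smul_add, ha r hr, hb r hr, add_zero]
        zero_mem' := fun r _ => smul_zero r
        smul_mem' := by
          intro c x hx r hr
          rw [smul_comm, hx r hr, smul_zero] }
    have hmemT : ∀ x : M, x ∈ T ↔ ∀ r ∈ p, r • x = 0 := fun x => Iff.rfl
    -- P of T, via lemma A
    obtain ⟨k, v, hv⟩ := Module.Finite.exists_fin (R := R) (M := ↥T)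
    have PT : P ↥T := by
      refine pAux_span R P hiso hsub hext p hp hRp k ↥T ?_ ?_ v hv
      · intro r hr x
        exact Subtype.ext (x.2 r hr)
      · intro s hs x hx
        have : s • (x : M) = 0 := congrArg Subtype.val hx
        exact Subtype.ext (hreg s hs _ this)
    -- P of M ⧸ T, via induction hypothesis
    have hkillQ : ∀ r ∈ p ^ n, ∀ x : M ⧸ T, r • x = 0 := by
      intro r hr x
      obtain ⟨y, rfl⟩ := T.mkQ_surjective x
      rw [← map_smul, ← LinearMap.mem_ker, Submodule.ker_mkQ]
      intro u hu
      rw [smul_smul]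
      refine hkill (u * r) ?_ y
      rw [pow_succ, mul_comm u r]
      exact Ideal.mul_mem_mul hr hu
    have hregQ : ∀ s ∉ p, ∀ x : M ⧸ T, s • x = 0 → x = 0 := by
      intro s hs x hsx
      obtain ⟨y, rfl⟩ := T.mkQ_surjective x
      rw [← map_smul, ← LinearMap.mem_ker, Submodule.ker_mkQ] at hsx
      rw [← LinearMap.mem_ker, Submodule.ker_mkQ]
      intro u hu
      refine hreg s hs _ ?_
      rw [smul_comm]
      exact hsx u hu
    have PQ : P (M ⧸ T) := IH (M ⧸ T) hkillQ hregQ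
    exact hext ↥T M (M ⧸ T) T.subtype T.mkQ T.injective_subtype T.mkQ_surjective
      (by rw [Submodule.range_subtype, Submodule.ker_mkQ]) PT PQ

end Aux

/-- Let `R` be commutative noetherian and `P` an isomorphism-invariant predicate on
finitely generated `R`-modules closed under submodules and extensions. If `M` is a nonzero
finitely generated module whose set of associated primes is exactly `{p}`, and `P (R/p)`
holds, then `P M` holds. -/
theorem mem_of_ass_singleton
    (R : Type u) [CommRing R] [IsNoetherianRing R]
    (P : ∀ (M : Type u) [AddCommGroup M] [Module R M], Prop)
    (hiso : ∀ (M N : Type u) [AddCommGroup M] [Module R M] [AddCommGroup N] [Module R N]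
      [Module.Finite R M] [Module.Finite R N], (M ≃ₗ[R] N) → P M → P N)
    (hsub : ∀ (M : Type u) [AddCommGroup M] [Module R M] [Module.Finite R M]
      (N : Submodule R M), P M → P N)
    (hext : ∀ (A B C : Type u) [AddCommGroup A] [Module R A] [AddCommGroup B] [Module R B]
      [AddCommGroup C] [Module R C] [Module.Finite R A] [Module.Finite R B]
      [Module.Finite R C] (f : A →ₗ[R] B) (g : B →ₗ[R] C),
      Function.Injective f → Function.Surjective g → LinearMap.range f = LinearMap.ker g →
      P A → P C → P B)
    (M : Type u) [AddCommGroup M] [Module R M] [Module.Finite R M] [Nontrivial M]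
    (p : Ideal R) (hp : associatedPrimes R M = {p})
    (hRp : P (R ⧸ p)) :
    P M := by
  haveI : IsNoetherian R M := inferInstance
  have hpA : IsAssociatedPrime p M := by
    have : p ∈ associatedPrimes R M := hp.symm ▸ Set.mem_singleton p
    exact this
  have hprime : p.IsPrime := hpA.isPrime
  -- elements outside p act injectively on M
  have hreg : ∀ s ∉ p, ∀ x : M, s • x = 0 → x = 0 := by
    intro s hs x hsx
    by_contra hx
    obtain ⟨q, hq, hle⟩ := exists_le_isAssociatedPrime_of_isNoetherianRing R x hx
    have hqp : q = p := by
      have : q ∈ associatedPrimes R M := hq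
      rwa [hp, Set.mem_singleton_iff] at this
    exact hs (hqp ▸ hle (Submodule.mem_colon_singleton.mpr ((Submodule.mem_bot R).mpr hsx)))
  -- elements of p act nilpotently on M
  have hnil : ∀ r ∈ p, ∃ k : ℕ, ∀ x : M, r ^ k • x = 0 := by
    intro r hr
    let f : ℕ →o Submodule R M :=
      ⟨fun i => LinearMap.ker ((r ^ i) • (LinearMap.id : M →ₗ[R] M)), by
        intro i j hij x hx
        simp only [LinearMap.mem_ker, LinearMap.smul_apply, LinearMap.id_apply] at hx ⊢
        rw [← pow_sub_mul_pow r hij, mul_smul, hx, smul_zero]⟩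
    have hfm : ∀ (i : ℕ) (x : M), x ∈ f i ↔ r ^ i • x = 0 := by
      intro i x
      show x ∈ LinearMap.ker ((r ^ i) • (LinearMap.id : M →ₗ[R] M)) ↔ _
      simp only [f, LinearMap.mem_ker, LinearMap.smul_apply, LinearMap.id_apply,
        OrderHom.coe_mk]
    obtain ⟨k, hk⟩ := monotone_stabilizes_iff_noetherian.mpr (inferInstance : IsNoetherian R M) f
    refine ⟨k, ?_⟩
    by_contra hcon
    push_neg at hcon
    obtain ⟨x, hx⟩ := hcon
    let g : M →ₗ[R] M := (r ^ k) • LinearMap.id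
    have hg : ∀ z : M, g z = r ^ k • z := fun z => rfl
    haveI : Nontrivial ↥(LinearMap.range g) := by
      refine ⟨⟨⟨g x, LinearMap.mem_range_self g x⟩, 0, ?_⟩⟩
      intro h
      exact hx (by simpa [hg] using congrArg Subtype.val h)
    obtain ⟨q, hq⟩ := associatedPrimes.nonempty R ↥(LinearMap.range g)
    have hqM : q ∈ associatedPrimes R M :=
      hq.map_of_injective (LinearMap.range g).subtype (LinearMap.range g).injective_subtype
    have hqp : q = p := by rwa [hp, Set.mem_singleton_iff] at hqM
    obtain ⟨hqprime, y, hy⟩ := isAssociatedPrime_iff.mp hq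
    have hry : r • y = 0 := by
      have : r ∈ q := hqp ▸ hr
      rw [hy] at this
      exact (Submodule.mem_bot R).mp (Submodule.mem_colon_singleton.mp this)
    obtain ⟨z, hz⟩ := y.2
    have h1 : r ^ (k + 1) • z = 0 := by
      have hcv : r • (y : M) = 0 := congrArg Subtype.val hry
      rw [← hz] at hcv
      rw [pow_succ, mul_comm, mul_smul]
      simpa [hg] using hcv
    have h2 : z ∈ f k := by
      rw [hk (k + 1) (Nat.le_succ k)]
      exact (hfm (k + 1) z).mpr h1
    have h3 : (y : M) = 0 := by
      rw [← hz, hg]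
      exact (hfm k z).mp h2
    have hy0 : y = 0 := Subtype.ext h3
    apply hqprime.ne_top
    rw [hy, hy0, eq_top_iff]
    intro s _
    exact Submodule.mem_colon_singleton.mpr (by rw [smul_zero]; exact Submodule.zero_mem _)
  have hrad : p ≤ ((⊤ : Submodule R M).annihilator).radical := by
    intro r hr
    obtain ⟨k, hk⟩ := hnil r hr
    exact ⟨k, Submodule.mem_annihilator.mpr fun x _ => hk x⟩
  obtain ⟨n, hn⟩ := Ideal.exists_pow_le_of_le_radical_of_fg hrad (IsNoetherian.noetherian p)
  exact pAux_pow R P hiso hsub hext p hprime hRp n M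
    (fun r hrm x => Submodule.mem_annihilator.mp (hn hrm) x Submodule.mem_top) hreg
end

section
/- Let R be a commutative noetherian ring and let M, N be finitely generated R-modules with Supp M ⊆ Supp N. Then M belongs to the Serre subcategory of the category of finitely generated R-modules generated by N; that is, for every isomorphism-invariant predicate P on finitely generated R-modules closed under submodules, quotient modules and extensions, if P N holds then P M holds. -/
universe u

section Aux

variable {R : Type u} [CommRing R] [IsNoetherianRing R]

lemma serre_aux_fin_submodule {A : Type u} [AddCommGroup A] [Module R A]
    [Module.Finite R A] (S : Submodule R A) : Module.Finite R ↥S :=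
  Module.Finite.iff_fg.mpr (IsNoetherian.noetherian S)

omit [IsNoetherianRing R] in
lemma serre_aux_fin_quot {A : Type u} [AddCommGroup A] [Module R A]
    [Module.Finite R A] (S : Submodule R A) : Module.Finite R (A ⧸ S) :=
  Module.Finite.of_surjective S.mkQ (Submodule.mkQ_surjective S)

end Aux

/-- Over a commutative noetherian ring, if `M`, `N` are finitely generated with
`Supp M ⊆ Supp N`, then `M` lies in the Serre subcategory of `mod R` generated by `N`:
every isomorphism-invariant predicate on finitely generated `R`-modules closed under
submodules, quotient modules and extensions which contains `N` also contains `M`. -/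
theorem mem_serre_generated_of_support_subset
    (R : Type u) [CommRing R] [IsNoetherianRing R]
    (M N : Type u) [AddCommGroup M] [Module R M] [AddCommGroup N] [Module R N]
    [Module.Finite R M] [Module.Finite R N]
    (hsupp : Module.support R M ⊆ Module.support R N)
    (P : ∀ (A : Type u) [AddCommGroup A] [Module R A], Prop)
    (hiso : ∀ (A B : Type u) [AddCommGroup A] [Module R A] [AddCommGroup B] [Module R B]
      [Module.Finite R A] [Module.Finite R B], (A ≃ₗ[R] B) → P A → P B)
    (hsub : ∀ (A : Type u) [AddCommGroup A] [Module R A] [Module.Finite R A]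
      (B : Submodule R A), P A → P B)
    (hquot : ∀ (A : Type u) [AddCommGroup A] [Module R A] [Module.Finite R A]
      (B : Submodule R A), P A → P (A ⧸ B))
    (hext : ∀ (A B C : Type u) [AddCommGroup A] [Module R A] [AddCommGroup B] [Module R B]
      [AddCommGroup C] [Module R C] [Module.Finite R A] [Module.Finite R B]
      [Module.Finite R C] (f : A →ₗ[R] B) (g : B →ₗ[R] C),
      Function.Injective f → Function.Surjective g → LinearMap.range f = LinearMap.ker g →
      P A → P C → P B)
    (hN : P N) :
    P M := by
  classical
  -- every module with `P` gives `P` of any subsingleton module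
  have hzero : ∀ (A : Type u) [AddCommGroup A] [Module R A], Subsingleton A → P A := by
    intro A _ _ hA
    haveI := hA
    haveI : Module.Finite R A :=
      Module.Finite.of_surjective (0 : R →ₗ[R] A) (fun a => ⟨0, Subsingleton.elim _ _⟩)
    haveI := serre_aux_fin_submodule (R := R) (⊥ : Submodule R N)
    exact hiso _ _ (LinearEquiv.ofSubsingleton _ _) (hsub N ⊥ hN)
  -- `P` holds for finite powers of `N`
  have hpi : ∀ n : ℕ, P (Fin n → N) := by
    intro n
    induction n with
    | zero => exact hzero _ inferInstance
    | succ n ih =>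
      let f : N →ₗ[R] (Fin (n + 1) → N) :=
        { toFun := fun y => Fin.cons y 0
          map_add' := by
            intro a b
            ext j
            refine Fin.cases ?_ (fun j => ?_) j <;> simp
          map_smul' := by
            intro c a
            ext j
            refine Fin.cases ?_ (fun j => ?_) j <;> simp }
      let g : (Fin (n + 1) → N) →ₗ[R] (Fin n → N) := LinearMap.funLeft R N Fin.succ
      have hf : Function.Injective f := by
        intro a b h
        simpa [f] using congrFun h 0
      have hg : Function.Surjective g :=
        LinearMap.funLeft_surjective_of_injective R N _ (Fin.succ_injective n)
      have hrange : LinearMap.range f = LinearMap.ker g := by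
        ext x
        constructor
        · rintro ⟨y, rfl⟩
          ext i
          simp [f, g, LinearMap.funLeft]
        · intro hx
          refine ⟨x 0, ?_⟩
          ext i
          refine Fin.cases ?_ (fun j => ?_) i
          · simp [f]
          · simp only [f, LinearMap.coe_mk, AddHom.coe_mk, Fin.cons_succ, Pi.zero_apply]
            exact (congrFun (LinearMap.mem_ker.mp hx) j).symm
      exact hext _ _ _ f g hf hg hrange hN ih
  -- key lemma : `P (R ⧸ p)` for primes containing the annihilator of `N`
  have hprime : ∀ p : Ideal R, p.IsPrime → Module.annihilator R N ≤ p →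
      P (R ⧸ (p : Submodule R R)) := by
    intro p hp hle
    obtain ⟨n, v, hv⟩ := Module.Finite.exists_fin (R := R) (M := N)
    let φ : R →ₗ[R] (Fin n → N) := LinearMap.pi fun i => LinearMap.toSpanSingleton R N (v i)
    have hker : LinearMap.ker φ = (Module.annihilator R N : Submodule R R) := by
      ext r
      simp only [LinearMap.mem_ker, Module.mem_annihilator]
      constructor
      · intro h m
        have hm : m ∈ Submodule.span R (Set.range v) := hv ▸ Submodule.mem_top
        refine Submodule.span_induction ?_ ?_ ?_ ?_ hm
        · rintro _ ⟨i, rfl⟩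
          exact congrFun h i
        · exact smul_zero r
        · intro a b _ _ ha hb
          rw [smul_add, ha, hb, add_zero]
        · intro c a _ ha
          rw [smul_comm, ha, smul_zero]
      · intro h
        ext i
        exact h (v i)
    -- `P (R ⧸ annihilator)`
    haveI := serre_aux_fin_submodule (R := R) (LinearMap.range φ)
    haveI := serre_aux_fin_quot (R := R) (LinearMap.ker φ)
    have h1 : P (R ⧸ LinearMap.ker φ) :=
      hiso _ _ φ.quotKerEquivRange.symm (hsub (Fin n → N) (LinearMap.range φ) (hpi n))
    rw [hker] at h1
    -- quotient further by `p`
    have hle' : (Module.annihilator R N : Submodule R R) ≤ (p : Submodule R R) := hle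
    haveI : Module.Finite R (R ⧸ (Module.annihilator R N : Submodule R R)) :=
      serre_aux_fin_quot (R := R) _
    have h2 := hquot (R ⧸ (Module.annihilator R N : Submodule R R))
      (Submodule.map (Submodule.mkQ (Module.annihilator R N : Submodule R R))
        (p : Submodule R R)) h1
    haveI : Module.Finite R ((R ⧸ (Module.annihilator R N : Submodule R R)) ⧸
        (Submodule.map (Submodule.mkQ (Module.annihilator R N : Submodule R R))
          (p : Submodule R R))) := serre_aux_fin_quot (R := R) _
    haveI : Module.Finite R (R ⧸ (p : Submodule R R)) := serre_aux_fin_quot (R := R) _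
    exact hiso _ _ (Submodule.quotientQuotientEquivQuotient
      (Module.annihilator R N : Submodule R R) (p : Submodule R R) hle') h2
  -- main argument by noetherian induction on submodules of `M`
  haveI : IsNoetherian R M := isNoetherian_of_isNoetherianRing_of_finite R M
  haveI finS : ∀ S : Submodule R M, Module.Finite R ↥S :=
    fun S => serre_aux_fin_submodule (R := R) S
  have hbot : P ↥(⊥ : Submodule R M) := hzero _ inferInstance
  obtain ⟨S, hS, hmax⟩ := set_has_maximal_iff_noetherian.mpr ‹IsNoetherian R M›
    {S : Submodule R M | P ↥S} ⟨⊥, hbot⟩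
  by_cases hTop : S = ⊤
  · subst hTop
    exact hiso _ _ Submodule.topEquiv hS
  · exfalso
    haveI : Nontrivial (M ⧸ S) :=
      Submodule.Quotient.nontrivial_iff.mpr hTop
    haveI := serre_aux_fin_quot (R := R) S
    obtain ⟨p, hp'⟩ := associatedPrimes.nonempty R (M ⧸ S)
    obtain ⟨hp, x, hx⟩ := isAssociatedPrime_iff.mp hp'
    rw [Submodule.bot_colon'] at hx
    have hxne : x ≠ 0 := by
      rintro rfl
      rw [Submodule.span_zero_singleton, Submodule.annihilator_bot] at hx
      exact hp.ne_top hx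
    -- `p` contains the annihilator of `N`
    have hpN : Module.annihilator R N ≤ p := by
      have h1 : (⟨p, hp⟩ : PrimeSpectrum R) ∈ Module.support R ↥(R ∙ x) := by
        haveI := serre_aux_fin_submodule (R := R) (R ∙ x)
        rw [Module.mem_support_iff_of_finite]
        exact hx.ge
      have h2 : Module.support R ↥(R ∙ x) ⊆ Module.support R (M ⧸ S) :=
        Module.support_subset_of_injective (R ∙ x).subtype (Submodule.injective_subtype _)
      have h3 : Module.support R (M ⧸ S) ⊆ Module.support R M :=
        Module.support_subset_of_surjective S.mkQ (Submodule.mkQ_surjective S)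
      exact Module.annihilator_le_of_mem_support (hsupp (h3 (h2 h1)))
    have hPp : P (R ⧸ (p : Submodule R R)) := hprime p hp hpN
    -- `P (R ∙ x)`
    have hkerx : LinearMap.ker (LinearMap.toSpanSingleton R (M ⧸ S) x)
        = (p : Submodule R R) := by
      ext r
      rw [LinearMap.mem_ker, hx, Submodule.mem_annihilator_span_singleton]
      rfl
    haveI := serre_aux_fin_quot (R := R) (p : Submodule R R)
    haveI := serre_aux_fin_submodule (R := R) (R ∙ x)
    have hPx : P ↥(R ∙ x) := by
      have e : (R ⧸ (p : Submodule R R)) ≃ₗ[R] ↥(R ∙ x) :=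
        ((Submodule.quotEquivOfEq _ _ hkerx.symm).trans
          (LinearMap.toSpanSingleton R (M ⧸ S) x).quotKerEquivRange).trans
          (LinearEquiv.ofEq _ _ (LinearMap.span_singleton_eq_range R (M ⧸ S) x).symm)
      exact hiso _ _ e hPp
    -- build the extension
    set S' : Submodule R M := Submodule.comap S.mkQ (R ∙ x) with hS'def
    have hle : S ≤ S' := by
      intro y hy
      have : S.mkQ y = 0 := (Submodule.Quotient.mk_eq_zero S).mpr hy
      show S.mkQ y ∈ (R ∙ x)
      rw [this]; exact Submodule.zero_mem _
    obtain ⟨y, hy⟩ := Submodule.mkQ_surjective S x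
    have hyS' : y ∈ S' := by
      show S.mkQ y ∈ (R ∙ x)
      rw [hy]; exact Submodule.mem_span_singleton_self x
    have hyS : y ∉ S := by
      intro h
      exact hxne (hy ▸ (Submodule.Quotient.mk_eq_zero S).mpr h)
    let f : ↥S →ₗ[R] ↥S' := Submodule.inclusion hle
    let g : ↥S' →ₗ[R] ↥(R ∙ x) := S.mkQ.restrict (fun z hz => hz)
    have hg : Function.Surjective g := by
      rintro ⟨z, hz⟩
      obtain ⟨w, hw⟩ := Submodule.mkQ_surjective S z
      have hwS' : w ∈ S' := by show S.mkQ w ∈ (R ∙ x); rw [hw]; exact hz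
      exact ⟨⟨w, hwS'⟩, Subtype.ext hw⟩
    have hfg : LinearMap.range f = LinearMap.ker g := by
      ext ⟨z, hz⟩
      constructor
      · rintro ⟨⟨w, hw⟩, hfw⟩
        have hz' : z = w := (congrArg Subtype.val hfw).symm
        have hwz : z ∈ S := by rw [hz']; exact hw
        exact LinearMap.mem_ker.mpr
          (Subtype.ext ((Submodule.Quotient.mk_eq_zero S).mpr hwz))
      · intro h
        have h0 : S.mkQ z = 0 := congrArg Subtype.val (LinearMap.mem_ker.mp h)
        exact ⟨⟨z, (Submodule.Quotient.mk_eq_zero S).mp h0⟩, Subtype.ext rfl⟩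
    have hPS' : P ↥S' :=
      hext _ _ _ f g (Submodule.inclusion_injective hle) hg hfg hS hPx
    have hlt : S < S' := lt_of_le_of_ne hle (fun h => hyS (by rw [h]; exact hyS'))
    exact hmax S' hPS' hlt
end

section
/- Let R be a commutative noetherian ring and let M, N be finitely generated R-modules with Ass M ⊆ Ass N. Then M belongs to the smallest subcategory of the category of finitely generated R-modules closed under submodules and extensions containing N; that is, for every isomorphism-invariant predicate P on finitely generated R-modules closed under submodules and extensions, if P N holds then P M holds. -/
universe u

section Aux

variable (R : Type u) [CommRing R]

/-- Bundle of the closure hypotheses on the predicate `P`. -/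
structure SubExtClosedPred
    (P : ∀ (A : Type u) [AddCommGroup A] [Module R A], Prop) : Prop where
  iso : ∀ (A B : Type u) [AddCommGroup A] [Module R A] [AddCommGroup B] [Module R B]
      [Module.Finite R A] [Module.Finite R B], (A ≃ₗ[R] B) → P A → P B
  sub : ∀ (A : Type u) [AddCommGroup A] [Module R A] [Module.Finite R A]
      (B : Submodule R A), P A → P B
  ext : ∀ (A B C : Type u) [AddCommGroup A] [Module R A] [AddCommGroup B] [Module R B]
      [AddCommGroup C] [Module R C] [Module.Finite R A] [Module.Finite R B]
      [Module.Finite R C] (f : A →ₗ[R] B) (g : B →ₗ[R] C),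
      Function.Injective f → Function.Surjective g → LinearMap.range f = LinearMap.ker g →
      P A → P C → P B

variable [IsNoetherianRing R]

lemma auxFiniteSubmodule (A : Type u) [AddCommGroup A] [Module R A] [Module.Finite R A]
    (S : Submodule R A) : Module.Finite R S := by
  haveI : IsNoetherian R A := isNoetherian_of_isNoetherianRing_of_finite R A
  exact Module.Finite.iff_fg.mpr (IsNoetherian.noetherian S)

/-- A linear equivalence between any two subsingleton modules. -/
def auxSubsingletonEquiv (A B : Type u) [AddCommGroup A] [Module R A] [AddCommGroup B]
    [Module R B] [Subsingleton A] [Subsingleton B] : A ≃ₗ[R] B where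
  toFun _ := 0
  invFun _ := 0
  map_add' _ _ := by simp
  map_smul' _ _ := by simp
  left_inv _ := Subsingleton.elim _ _
  right_inv _ := Subsingleton.elim _ _

variable (P : ∀ (A : Type u) [AddCommGroup A] [Module R A], Prop)
variable (N : Type u) [AddCommGroup N] [Module R N] [Module.Finite R N]

lemma auxSubsingleton (H : SubExtClosedPred R P) (hN : P N)
    (A : Type u) [AddCommGroup A] [Module R A] [Module.Finite R A] [Subsingleton A] : P A := by
  haveI := auxFiniteSubmodule R N (⊥ : Submodule R N)
  exact H.iso ↥(⊥ : Submodule R N) A (auxSubsingletonEquiv R _ _) (H.sub N ⊥ hN)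

lemma auxEmbed (H : SubExtClosedPred R P) (A B : Type u) [AddCommGroup A] [Module R A]
    [AddCommGroup B] [Module R B] [Module.Finite R A] [Module.Finite R B]
    (f : A →ₗ[R] B) (hf : Function.Injective f) (hB : P B) : P A := by
  haveI := auxFiniteSubmodule R B (LinearMap.range f)
  exact H.iso ↥(LinearMap.range f) A (LinearEquiv.ofInjective f hf).symm
    (H.sub B (LinearMap.range f) hB)

lemma auxQuotPrime (H : SubExtClosedPred R P) (hN : P N) (p : Ideal R)
    (hp : p ∈ associatedPrimes R N) : P (R ⧸ p) := by
  obtain ⟨hprime, x, hx⟩ := isAssociatedPrime_iff.mp hp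
  have hpt : p = Ideal.torsionOf R N x := by
    rw [hx]; ext a
    rw [Submodule.mem_colon_singleton, Submodule.mem_bot, Ideal.mem_torsionOf_iff]
  haveI := auxFiniteSubmodule R N (R ∙ x)
  refine H.iso ↥(R ∙ x) (R ⧸ p) ?_ (H.sub N (R ∙ x) hN)
  exact ((Submodule.quotEquivOfEq _ _ hpt).trans
    (Ideal.quotTorsionOfEquivSpanSingleton R N x)).symm

lemma auxPi (H : SubExtClosedPred R P) (hN : P N) (C : Type u) [AddCommGroup C] [Module R C]
    [Module.Finite R C] (hC : P C) (m : ℕ) : P (Fin m → C) := by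
  induction m with
  | zero => exact auxSubsingleton R P N H hN _
  | succ m ih =>
    classical
    refine H.ext C (Fin (m + 1) → C) (Fin m → C)
      (LinearMap.single R (fun _ : Fin (m + 1) => C) 0)
      (LinearMap.funLeft R C Fin.succ)
      (fun x y h => by
        have := congrFun h 0
        simpa using this)
      (LinearMap.funLeft_surjective_of_injective R C _ (Fin.succ_injective m))
      ?_ hC ih
    ext v
    simp only [LinearMap.mem_range, LinearMap.mem_ker]
    constructor
    · rintro ⟨d, rfl⟩
      ext i
      simp only [LinearMap.funLeft_apply, LinearMap.single_apply, Pi.zero_apply]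
      exact Pi.single_eq_of_ne (Fin.succ_ne_zero i) d
    · intro hv
      refine ⟨v 0, ?_⟩
      ext j
      refine Fin.cases ?_ ?_ j
      · simp
      · intro i
        have hvi : v i.succ = 0 := congrFun hv i
        simp only [LinearMap.single_apply]
        rw [Pi.single_eq_of_ne (Fin.succ_ne_zero i), hvi]

/-- The torsion-free case: if every nonzero element of `A` has annihilator exactly `p`,
with `p` an associated prime of `N`, then `P A`. -/
lemma auxTorsionFree (H : SubExtClosedPred R P) (hN : P N) (p : Ideal R)
    (hp : p ∈ associatedPrimes R N) (A : Type u) [AddCommGroup A] [Module R A]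
    [Module.Finite R A]
    (htf : ∀ x : A, x ≠ 0 → ∀ a : R, a • x = 0 ↔ a ∈ p) : P A := by
  classical
  haveI hprime : p.IsPrime := hp.1
  have htor : Module.IsTorsionBySet R A (p : Set R) := by
    intro x a
    by_cases hx : x = 0
    · simp [hx]
    · exact (htf x hx a).mpr a.2
  letI : Module (R ⧸ p) A := htor.module
  haveI : IsScalarTower R (R ⧸ p) A := htor.isScalarTower
  haveI : Module.Finite (R ⧸ p) A := Module.Finite.of_restrictScalars_finite R (R ⧸ p) A
  have hmk : ∀ (b : R) (x : A), (Ideal.Quotient.mk p b) • x = b • x :=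
    fun b x => Module.IsTorsionBySet.mk_smul htor b x
  have hzsmul : ∀ (r : R ⧸ p) (x : A), r • x = 0 → r = 0 ∨ x = 0 := by
    intro r x hrx
    obtain ⟨a, rfl⟩ := Ideal.Quotient.mk_surjective r
    by_cases hx : x = 0
    · exact Or.inr hx
    · left
      rw [hmk] at hrx
      rw [Ideal.Quotient.eq_zero_iff_mem]
      exact (htf x hx a).mp hrx
  obtain ⟨n, g, hg⟩ := Module.Finite.exists_fin (R := R) (M := A)
  have hgD : Submodule.span (R ⧸ p) (Set.range g) = ⊤ := by
    rw [eq_top_iff]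
    intro x _
    have hx : x ∈ Submodule.span R (Set.range g) := by rw [hg]; trivial
    exact Submodule.span_le_restrictScalars R (R ⧸ p) (Set.range g) hx
  obtain ⟨I, hli, hmax⟩ := exists_maximal_linearIndepOn (R ⧸ p) g
  set F : Submodule (R ⧸ p) A := Submodule.span (R ⧸ p) (Set.range fun i : I => g i) with hF
  let b : Module.Basis I (R ⧸ p) F := Module.Basis.span hli
  have hch : ∀ i : Fin n, ∃ a : R ⧸ p, a ≠ 0 ∧ (i ∉ I → a • g i ∈ F) := by
    intro i
    by_cases hi : i ∈ I
    · exact ⟨1, one_ne_zero, fun h => absurd hi h⟩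
    · obtain ⟨a, ha, haF⟩ := hmax i hi
      refine ⟨a, ha, fun _ => ?_⟩
      rwa [hF, ← Set.image_eq_range]
  choose c hc0 hcF using hch
  set a : R ⧸ p := ∏ i : Fin n, c i with ha
  have ha0 : a ≠ 0 := by
    rw [ha]
    exact Finset.prod_ne_zero_iff.mpr fun i _ => hc0 i
  have hmem : ∀ x : A, a • x ∈ F := by
    intro x
    have hx : x ∈ Submodule.span (R ⧸ p) (Set.range g) := by rw [hgD]; trivial
    have hsub : Set.range g ⊆ (F.comap (LinearMap.lsmul (R ⧸ p) A a) : Set A) := by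
      rintro _ ⟨i, rfl⟩
      simp only [SetLike.mem_coe, Submodule.mem_comap, LinearMap.lsmul_apply]
      by_cases hi : i ∈ I
      · exact Submodule.smul_mem F a (Submodule.subset_span ⟨⟨i, hi⟩, rfl⟩)
      · have haeq : a = (∏ j ∈ Finset.univ.erase i, c j) * c i := by
          rw [ha, mul_comm, Finset.mul_prod_erase _ _ (Finset.mem_univ i)]
        rw [haeq, mul_smul]
        exact Submodule.smul_mem F _ (hcF i hi)
    exact (Submodule.span_le.mpr hsub) hx
  let φ : A →ₗ[R ⧸ p] F := (LinearMap.lsmul (R ⧸ p) A a).codRestrict F hmem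
  have hφinj : Function.Injective φ := by
    intro x y hxy
    have h2 : a • x = a • y := congrArg Subtype.val hxy
    have h3 : a • (x - y) = 0 := by rw [smul_sub, h2, sub_self]
    rcases hzsmul a (x - y) h3 with h | h
    · exact absurd h ha0
    · exact sub_eq_zero.mp h
  haveI : Fintype I := Fintype.ofFinite I
  let e1 : F ≃ₗ[R ⧸ p] (I →₀ (R ⧸ p)) := b.repr
  let e2 : (I →₀ (R ⧸ p)) ≃ₗ[R ⧸ p] (I → (R ⧸ p)) := Finsupp.linearEquivFunOnFinite (R ⧸ p) _ I
  let e3 : (I → (R ⧸ p)) ≃ₗ[R ⧸ p] (Fin (Fintype.card I) → (R ⧸ p)) :=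
    LinearEquiv.funCongrLeft (R ⧸ p) (R ⧸ p) (Fintype.equivFin I).symm
  let ψ : A →ₗ[R ⧸ p] (Fin (Fintype.card I) → (R ⧸ p)) :=
    e3.toLinearMap ∘ₗ e2.toLinearMap ∘ₗ e1.toLinearMap ∘ₗ φ
  have hψ : Function.Injective ψ := by
    have : ⇑ψ = ⇑e3 ∘ ⇑e2 ∘ ⇑e1 ∘ ⇑φ := rfl
    rw [this]
    exact e3.injective.comp (e2.injective.comp (e1.injective.comp hφinj))
  let ψR : A →ₗ[R] (Fin (Fintype.card I) → (R ⧸ p)) := ψ.restrictScalars R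
  exact auxEmbed R P H A (Fin (Fintype.card I) → (R ⧸ p)) ψR hψ
    (auxPi R P N H hN (R ⧸ p) (auxQuotPrime R P N H hN p hp) (Fintype.card I))

/-- The coprimary case. -/
lemma auxCoprimary (H : SubExtClosedPred R P) (hN : P N) (p : Ideal R)
    (hp : p ∈ associatedPrimes R N) :
    ∀ (k : ℕ) (A : Type u) [AddCommGroup A] [Module R A] [Module.Finite R A],
      (∀ (x : A) (a : R), a ∈ p ^ k → a • x = 0) →
      associatedPrimes R A ⊆ {p} → P A := by
  intro k
  induction k with
  | zero =>
    intro A _ _ _ hkill _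
    have hone : (1 : R) ∈ p ^ 0 := by rw [pow_zero, Ideal.one_eq_top]; trivial
    haveI : Subsingleton A := subsingleton_of_forall_eq 0 fun x => by
      rw [← one_smul R x]; exact hkill x 1 hone
    exact auxSubsingleton R P N H hN A
  | succ k ihk =>
    intro A _ _ _ hkill hass
    haveI hprime : p.IsPrime := hp.1
    haveI : IsNoetherian R A := isNoetherian_of_isNoetherianRing_of_finite R A
    set Γ : Submodule R A := Submodule.torsionBySet R A (p : Set R) with hΓ
    haveI : Module.Finite R ↥Γ := auxFiniteSubmodule R A Γ
    have hPΓ : P ↥Γ := by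
      apply auxTorsionFree R P N H hN p hp ↥Γ
      intro y hy a
      constructor
      · intro hay
        have hyne : (y : A) ≠ 0 := fun h => hy (Subtype.ext h)
        obtain ⟨q, hqass, hqle⟩ := exists_le_isAssociatedPrime_of_isNoetherianRing R (y : A) hyne
        have hq : q = p := Set.mem_singleton_iff.mp (hass hqass)
        rw [← hq]
        apply hqle
        rw [Submodule.mem_colon_singleton, Submodule.mem_bot]
        exact congrArg Subtype.val hay
      · intro hap
        apply Subtype.ext
        show a • (y : A) = 0
        exact (Submodule.mem_torsionBySet_iff _ _).mp y.2 ⟨a, hap⟩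
    have hkillq : ∀ (x : A ⧸ Γ) (a : R), a ∈ p ^ k → a • x = 0 := by
      intro x a ha
      obtain ⟨y, rfl⟩ := Submodule.Quotient.mk_surjective Γ x
      rw [← Submodule.Quotient.mk_smul, Submodule.Quotient.mk_eq_zero]
      rw [hΓ, Submodule.mem_torsionBySet_iff]
      rintro ⟨s, hs⟩
      show s • a • y = 0
      rw [smul_smul]
      refine hkill y (s * a) ?_
      have : a * s ∈ p ^ (k + 1) := by
        rw [pow_succ]
        exact Ideal.mul_mem_mul ha hs
      rwa [mul_comm]
    have hassq : associatedPrimes R (A ⧸ Γ) ⊆ {p} := by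
      intro q hq
      obtain ⟨hqp, xq, hxq⟩ := isAssociatedPrime_iff.mp hq
      obtain ⟨x, rfl⟩ := Submodule.Quotient.mk_surjective Γ xq
      have hxne : (Submodule.Quotient.mk x : A ⧸ Γ) ≠ 0 := by
        intro h
        apply hqp.ne_top
        rw [hxq, h]; ext; simp [Submodule.mem_colon_singleton]
      have hxΓ : x ∉ Γ := fun h => hxne ((Submodule.Quotient.mk_eq_zero Γ).mpr h)
      have hex : ∃ s ∈ p, s • x ≠ 0 := by
        by_contra hcon
        push_neg at hcon
        exact hxΓ ((Submodule.mem_torsionBySet_iff _ _).mpr fun s => hcon s s.2)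
      obtain ⟨s, hsp, hsx⟩ := hex
      obtain ⟨q', hq'ass, hq'le⟩ := exists_le_isAssociatedPrime_of_isNoetherianRing R (s • x) hsx
      have hq'p : q' = p := Set.mem_singleton_iff.mp (hass hq'ass)
      have hqlep : q ≤ p := by
        intro a haq
        have h0 : a • (Submodule.Quotient.mk x : A ⧸ Γ) = 0 := by
          rw [hxq] at haq
          exact (Submodule.mem_bot R).mp (Submodule.mem_colon_singleton.mp haq)
        have haxΓ : a • x ∈ Γ := by
          rwa [← Submodule.Quotient.mk_smul, Submodule.Quotient.mk_eq_zero] at h0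
        have h1 : s • a • x = 0 := (Submodule.mem_torsionBySet_iff _ _).mp haxΓ ⟨s, hsp⟩
        have h2 : a • s • x = 0 := by rwa [smul_comm]
        rw [← hq'p]
        exact hq'le (Submodule.mem_colon_singleton.mpr ((Submodule.mem_bot R).mpr h2))
      have hpleq : p ≤ q := by
        intro a hap
        have hpow : a ^ (k + 1) ∈ p ^ (k + 1) := Ideal.pow_mem_pow hap (k + 1)
        have h0 : (a ^ (k + 1)) • (Submodule.Quotient.mk x : A ⧸ Γ) = 0 := by
          rw [← Submodule.Quotient.mk_smul, hkill x _ hpow, Submodule.Quotient.mk_zero]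
        have h1 : a ^ (k + 1) ∈ q := by
          rw [hxq]
          exact Submodule.mem_colon_singleton.mpr ((Submodule.mem_bot R).mpr h0)
        exact hqp.mem_of_pow_mem _ h1
      exact Set.mem_singleton_iff.mpr (le_antisymm hqlep hpleq)
    have hPq : P (A ⧸ Γ) := ihk (A ⧸ Γ) hkillq hassq
    exact H.ext ↥Γ A (A ⧸ Γ) Γ.subtype Γ.mkQ (Submodule.injective_subtype Γ)
      (Submodule.mkQ_surjective Γ)
      (by rw [Submodule.range_subtype, Submodule.ker_mkQ]) hPΓ hPq

/-- The master lemma: any finitely generated module whose associated primes are among those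
of `N` satisfies `P`. -/
lemma auxMaster (H : SubExtClosedPred R P) (hN : P N) (A : Type u) [AddCommGroup A]
    [Module R A] [Module.Finite R A]
    (hass : associatedPrimes R A ⊆ associatedPrimes R N) : P A := by
  haveI : IsNoetherian R A := isNoetherian_of_isNoetherianRing_of_finite R A
  have wf : WellFounded ((· > ·) : Submodule R A → Submodule R A → Prop) :=
    IsNoetherian.wf inferInstance
  have key : ∀ Q : Submodule R A,
      associatedPrimes R (A ⧸ Q) ⊆ associatedPrimes R N → P (A ⧸ Q) := by
    intro Q
    refine WellFounded.induction wf
      (C := fun Q : Submodule R A =>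
        associatedPrimes R (A ⧸ Q) ⊆ associatedPrimes R N → P (A ⧸ Q)) Q ?_
    clear Q
    intro Q IH hQ
    by_cases htriv : Subsingleton (A ⧸ Q)
    · exact auxSubsingleton R P N H hN (A ⧸ Q)
    haveI : Nontrivial (A ⧸ Q) := not_subsingleton_iff_nontrivial.mp htriv
    obtain ⟨p, hpmem, hpmax⟩ :=
      set_has_maximal_iff_noetherian.mpr (inferInstance : IsNoetherian R R)
        (associatedPrimes R (A ⧸ Q)) (associatedPrimes.nonempty R (A ⧸ Q))
    haveI hpp : Ideal.IsPrime p := hpmem.isPrime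
    -- stabilization of the chain of `p`-power torsion submodules
    have hmono : Monotone fun n : ℕ =>
        Submodule.torsionBySet R (A ⧸ Q) ((p ^ n : Ideal R) : Set R) := by
      intro n m hnm x hx
      rw [Submodule.mem_torsionBySet_iff] at hx ⊢
      rintro ⟨s, hs⟩
      exact hx ⟨s, Ideal.pow_le_pow_right hnm hs⟩
    obtain ⟨n0, hn0⟩ := monotone_stabilizes_iff_noetherian.mpr
      (inferInstance : IsNoetherian R (A ⧸ Q))
      ⟨fun n => Submodule.torsionBySet R (A ⧸ Q) ((p ^ n : Ideal R) : Set R), hmono⟩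
    set k := n0 + 1 with hk
    have hstab : Submodule.torsionBySet R (A ⧸ Q) ((p ^ (k + 1) : Ideal R) : Set R) =
        Submodule.torsionBySet R (A ⧸ Q) ((p ^ k : Ideal R) : Set R) := by
      have h1 := hn0 k (Nat.le_succ n0)
      have h2 := hn0 (k + 1) (le_trans (Nat.le_succ n0) (Nat.le_succ k))
      exact (h2.symm.trans h1 :)
    set Γ : Submodule R (A ⧸ Q) :=
      Submodule.torsionBySet R (A ⧸ Q) ((p ^ k : Ideal R) : Set R) with hΓdef
    haveI : Module.Finite R ↥Γ := auxFiniteSubmodule R (A ⧸ Q) Γ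
    have hΓkill : ∀ (z : ↥Γ) (a : R), a ∈ p ^ k → a • z = 0 := by
      intro z a ha
      apply Subtype.ext
      show a • (z : A ⧸ Q) = 0
      exact (Submodule.mem_torsionBySet_iff _ _).mp z.2 ⟨a, ha⟩
    -- `Γ` is nonzero
    have hΓne : Γ ≠ ⊥ := by
      obtain ⟨_, x0, hx0⟩ := isAssociatedPrime_iff.mp hpmem
      have hx0ne : x0 ≠ 0 := by
        rintro rfl
        apply hpp.ne_top
        rw [hx0]; ext; simp [Submodule.mem_colon_singleton]
      have hx0Γ : x0 ∈ Γ := by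
        rw [hΓdef, Submodule.mem_torsionBySet_iff]
        rintro ⟨s, hs⟩
        show s • x0 = 0
        have hsp : s ∈ p := Ideal.pow_le_self (Nat.succ_ne_zero n0) hs
        rw [hx0] at hsp
        exact (Submodule.mem_bot R).mp (Submodule.mem_colon_singleton.mp hsp)
      exact (Submodule.ne_bot_iff Γ).mpr ⟨x0, hx0Γ, hx0ne⟩
    -- associated primes of `Γ`
    have hassΓ : associatedPrimes R ↥Γ ⊆ {p} := by
      intro q hq
      have hqA : q ∈ associatedPrimes R (A ⧸ Q) :=
        associatedPrimes.subset_of_injective (Submodule.injective_subtype Γ) hq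
      obtain ⟨hqprime, z, hz⟩ := isAssociatedPrime_iff.mp hq
      have hpk : p ^ k ≤ q := by
        intro a ha
        rw [hz, Submodule.mem_colon_singleton, Submodule.mem_bot]
        exact hΓkill z a ha
      have hple : p ≤ q := fun a ha =>
        hqprime.mem_of_pow_mem k (hpk (Ideal.pow_mem_pow ha k))
      have : q = p := by
        by_contra hne
        exact hpmax q hqA (lt_of_le_of_ne hple fun h => hne h.symm)
      exact Set.mem_singleton_iff.mpr this
    have hPΓ : P ↥Γ := auxCoprimary R P N H hN p (hQ hpmem) k ↥Γ
      (fun z a ha => hΓkill z a ha) hassΓ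
    -- associated primes of the quotient stay inside those of `A ⧸ Q`
    have hassQuot : associatedPrimes R ((A ⧸ Q) ⧸ Γ) ⊆ associatedPrimes R (A ⧸ Q) := by
      intro q hq
      obtain ⟨hqp, xq, hxq⟩ := isAssociatedPrime_iff.mp hq
      obtain ⟨x, rfl⟩ := Submodule.Quotient.mk_surjective Γ xq
      have hmemq : ∀ a : R, a ∈ q ↔ a • (Submodule.Quotient.mk x : (A ⧸ Q) ⧸ Γ) = 0 := by
        intro a
        rw [hxq, Submodule.mem_colon_singleton, Submodule.mem_bot]
      have hxne : (Submodule.Quotient.mk x : (A ⧸ Q) ⧸ Γ) ≠ 0 := by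
        intro h
        apply hqp.ne_top
        rw [hxq, h]; ext; simp [Submodule.mem_colon_singleton]
      have hnple : ¬ p ≤ q := by
        intro hple
        have hxΓ : x ∈ Γ := by
          rw [← hstab, Submodule.mem_torsionBySet_iff]
          rintro ⟨t, ht⟩
          show t • x = 0
          have hsuff : (p : Ideal R) ^ (k + 1) ≤ (R ∙ x).annihilator := by
            rw [pow_succ, Ideal.mul_le]
            intro r hr s hs
            rw [Submodule.mem_annihilator_span_singleton, mul_smul]
            have hsΓ : s • x ∈ Γ := by
              have h0 : s • (Submodule.Quotient.mk x : (A ⧸ Q) ⧸ Γ) = 0 :=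
                (hmemq s).mp (hple hs)
              rwa [← Submodule.Quotient.mk_smul, Submodule.Quotient.mk_eq_zero] at h0
            exact (Submodule.mem_torsionBySet_iff _ _).mp hsΓ ⟨r, hr⟩
          exact (Submodule.mem_annihilator_span_singleton _ _).mp (hsuff ht)
        exact hxne ((Submodule.Quotient.mk_eq_zero Γ).mpr hxΓ)
      obtain ⟨s, hsp, hsq⟩ := SetLike.not_le_iff_exists.mp hnple
      refine isAssociatedPrime_iff.mpr ⟨hqp, s ^ k • x, ?_⟩
      ext a
      rw [Submodule.mem_colon_singleton, Submodule.mem_bot]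
      constructor
      · intro haq
        have h0 : a • (Submodule.Quotient.mk x : (A ⧸ Q) ⧸ Γ) = 0 := (hmemq a).mp haq
        have haxΓ : a • x ∈ Γ := by
          rwa [← Submodule.Quotient.mk_smul, Submodule.Quotient.mk_eq_zero] at h0
        have h1 : s ^ k • a • x = 0 :=
          (Submodule.mem_torsionBySet_iff _ _).mp haxΓ ⟨s ^ k, Ideal.pow_mem_pow hsp k⟩
        rwa [smul_comm] at h1
      · intro h0
        have h1 : (a * s ^ k) • (Submodule.Quotient.mk x : (A ⧸ Q) ⧸ Γ) = 0 := by
          rw [← Submodule.Quotient.mk_smul, mul_smul, h0, Submodule.Quotient.mk_zero]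
        have h2 : a * s ^ k ∈ q := (hmemq _).mpr h1
        rcases hqp.mem_or_mem h2 with h | h
        · exact h
        · exact absurd (hqp.mem_of_pow_mem k h) hsq
    -- pass to a strictly bigger submodule of `A`
    set Q' : Submodule R A := Submodule.comap Q.mkQ Γ with hQ'def
    have hle : Q ≤ Q' := by
      intro x hx
      rw [hQ'def, Submodule.mem_comap]
      have hx0 : Q.mkQ x = 0 := (Submodule.Quotient.mk_eq_zero Q).mpr hx
      rw [hx0]
      exact Γ.zero_mem
    have hmap : Submodule.map Q.mkQ Q' = Γ :=
      Submodule.map_comap_eq_of_surjective (Submodule.mkQ_surjective Q) Γ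
    have hmapQ : Submodule.map Q.mkQ Q = ⊥ := by
      rw [eq_bot_iff]
      rintro y ⟨x, hx, rfl⟩
      show Q.mkQ x ∈ (⊥ : Submodule R (A ⧸ Q))
      rw [Submodule.mem_bot]
      exact (Submodule.Quotient.mk_eq_zero Q).mpr hx
    have hlt : Q < Q' := by
      refine lt_of_le_of_ne hle fun h => hΓne ?_
      rw [← hmap, ← h, hmapQ]
    have e : ((A ⧸ Q) ⧸ Γ) ≃ₗ[R] (A ⧸ Q') :=
      (Submodule.quotEquivOfEq Γ (Submodule.map Q.mkQ Q') hmap.symm).trans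
        (Submodule.quotientQuotientEquivQuotient Q Q' hle)
    have hres : associatedPrimes R (A ⧸ Q') ⊆ associatedPrimes R N := by
      rw [← LinearEquiv.AssociatedPrimes.eq e]
      exact fun q hq => hQ (hassQuot hq)
    have hPquot : P ((A ⧸ Q) ⧸ Γ) := H.iso (A ⧸ Q') ((A ⧸ Q) ⧸ Γ) e.symm (IH Q' hlt hres)
    exact H.ext ↥Γ (A ⧸ Q) ((A ⧸ Q) ⧸ Γ) Γ.subtype Γ.mkQ (Submodule.injective_subtype Γ)
      (Submodule.mkQ_surjective Γ)
      (by rw [Submodule.range_subtype, Submodule.ker_mkQ]) hPΓ hPquot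
  have e0 : (A ⧸ (⊥ : Submodule R A)) ≃ₗ[R] A := Submodule.quotEquivOfEqBot ⊥ rfl
  refine H.iso (A ⧸ (⊥ : Submodule R A)) A e0 (key ⊥ ?_)
  rw [LinearEquiv.AssociatedPrimes.eq e0]
  exact hass

end Aux

/-- Over a commutative noetherian ring, if `M`, `N` are finitely generated with
`Ass M ⊆ Ass N`, then `M` lies in the smallest subcategory of `mod R` closed under
submodules and extensions containing `N`: every isomorphism-invariant predicate on
finitely generated `R`-modules closed under submodules and extensions which contains `N`
also contains `M`. -/
theorem mem_subext_generated_of_associatedPrimes_subset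
    (R : Type u) [CommRing R] [IsNoetherianRing R]
    (M N : Type u) [AddCommGroup M] [Module R M] [AddCommGroup N] [Module R N]
    [Module.Finite R M] [Module.Finite R N]
    (hass : associatedPrimes R M ⊆ associatedPrimes R N)
    (P : ∀ (A : Type u) [AddCommGroup A] [Module R A], Prop)
    (hiso : ∀ (A B : Type u) [AddCommGroup A] [Module R A] [AddCommGroup B] [Module R B]
      [Module.Finite R A] [Module.Finite R B], (A ≃ₗ[R] B) → P A → P B)
    (hsub : ∀ (A : Type u) [AddCommGroup A] [Module R A] [Module.Finite R A]
      (B : Submodule R A), P A → P B)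
    (hext : ∀ (A B C : Type u) [AddCommGroup A] [Module R A] [AddCommGroup B] [Module R B]
      [AddCommGroup C] [Module R C] [Module.Finite R A] [Module.Finite R B]
      [Module.Finite R C] (f : A →ₗ[R] B) (g : B →ₗ[R] C),
      Function.Injective f → Function.Surjective g → LinearMap.range f = LinearMap.ker g →
      P A → P C → P B)
    (hN : P N) :
    P M := by
  exact auxMaster R P N ⟨hiso, hsub, hext⟩ hN M hass
end

section
/- Let R be a commutative noetherian ring and let P be an isomorphism-invariant predicate on finitely generated R-modules that is closed under finite direct sums and cokernels. Let M be a cyclic R-module with P M. Then there exists a bounded chain complex X• of finitely generated free R-modules such that the zeroth homology H_0(X•) is isomorphic to M and P (H_j(X•)) holds for every integer j. -/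
universe u

open Finset

section Koszul

variable {R : Type u} [CommRing R] {n : ℕ}

abbrev KW (R : Type u) [CommRing R] (n : ℕ) : Type u := Finset (Fin n) → R

def keps (i : Fin n) (s : Finset (Fin n)) : R := (-1) ^ (s.filter (fun k => k < i)).card

lemma keps_mul_self (i : Fin n) (s : Finset (Fin n)) : keps (R := R) i s * keps i s = 1 := by
  rw [keps, ← pow_add, ← two_mul, pow_mul]
  norm_num

lemma keps_insert (i j : Fin n) (s : Finset (Fin n)) (hj : j ∉ s) :
    keps (R := R) i (insert j s) = (if j < i then -1 else 1) * keps i s := by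
  unfold keps
  rw [Finset.filter_insert]
  split
  · rw [Finset.card_insert_of_notMem (fun h => hj (Finset.mem_filter.mp h).1), pow_succ]
    ring
  · ring

def KD (a : Fin n → R) : KW R n →ₗ[R] KW R n where
  toFun f := fun t => ∑ i ∈ tᶜ, keps i t * (a i * f (insert i t))
  map_add' f g := by
    funext t
    simp [mul_add, Finset.sum_add_distrib]
  map_smul' r f := by
    funext t
    simp [Finset.mul_sum, mul_left_comm]

lemma KD_apply (a : Fin n → R) (f : KW R n) (t : Finset (Fin n)) :
    KD a f t = ∑ i ∈ tᶜ, keps i t * (a i * f (insert i t)) := rfl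

def KH (k : Fin n) : KW R n →ₗ[R] KW R n where
  toFun f := fun s => if k ∈ s then keps k (s.erase k) * f (s.erase k) else 0
  map_add' f g := by
    funext s
    by_cases h : k ∈ s <;> simp [h, mul_add]
  map_smul' r f := by
    funext s
    by_cases h : k ∈ s <;> simp [h, mul_left_comm]

lemma KH_apply (k : Fin n) (f : KW R n) (s : Finset (Fin n)) :
    KH k f s = if k ∈ s then keps k (s.erase k) * f (s.erase k) else 0 := rfl

lemma keps_antisym (a : Fin n → R) (f : KW R n) (u : Finset (Fin n)) {i j : Fin n}
    (hiu : i ∉ u) (hju : j ∉ u) (hne : j ≠ i) :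
    keps i u * (a i * (keps j (insert i u) * (a j * f (insert j (insert i u))))) +
      keps j u * (a j * (keps i (insert j u) * (a i * f (insert i (insert j u))))) = 0 := by
  rw [keps_insert j i u hiu, keps_insert i j u hju, Finset.insert_comm i j u]
  rcases hne.lt_or_gt with h | h
  · rw [if_pos h, if_neg (asymm h)]
    ring
  · rw [if_neg (asymm h), if_pos h]
    ring

lemma KD_KD (a : Fin n → R) (f : KW R n) : KD a (KD a f) = 0 := by
  funext u
  show (KD a (KD a f)) u = 0
  rw [KD_apply]
  have step1 : ∀ i ∈ uᶜ, keps i u * (a i * KD a f (insert i u)) =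
      ∑ j ∈ uᶜ, (if j ≠ i then
        keps i u * (a i * (keps j (insert i u) * (a j * f (insert j (insert i u))))) else 0) := by
    intro i hi
    rw [KD_apply, Finset.compl_insert, ← Finset.filter_ne', Finset.sum_filter,
      Finset.mul_sum, Finset.mul_sum]
    refine Finset.sum_congr rfl fun j _ => ?_
    split <;> simp
  rw [Finset.sum_congr rfl step1, ← Finset.sum_product']
  refine Finset.sum_involution (fun p _ => p.swap) ?_ ?_ ?_ ?_
  · rintro ⟨i, j⟩ hp
    dsimp only [Prod.swap]
    by_cases h : j = i
    · subst h
      simp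
    · rw [if_pos h, if_pos (fun hh : i = j => h hh.symm)]
      have hij := Finset.mem_product.mp hp
      exact keps_antisym a f u (Finset.mem_compl.mp hij.1) (Finset.mem_compl.mp hij.2) h
  · rintro ⟨i, j⟩ hp hne heq
    apply hne
    have : j = i := congrArg Prod.fst heq
    simp [this]
  · rintro ⟨i, j⟩ hp
    have hij := Finset.mem_product.mp hp
    exact Finset.mem_product.mpr ⟨hij.2, hij.1⟩
  · intros
    rfl

end Koszul

section Koszul2

variable {R : Type u} [CommRing R] {n : ℕ}

lemma KD_KH_add_KH_KD (a : Fin n → R) (k : Fin n) (f : KW R n) :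
    KD a (KH k f) + KH k (KD a f) = a k • f := by
  funext t
  show KD a (KH k f) t + KH k (KD a f) t = a k * f t
  by_cases htk : k ∈ t
  · obtain ⟨u, hku, rfl⟩ : ∃ u, k ∉ u ∧ t = insert k u :=
      ⟨t.erase k, Finset.notMem_erase _ _, (Finset.insert_erase htk).symm⟩
    have h1 : KD a (KH k f) (insert k u) =
        ∑ i ∈ uᶜ.erase k, keps i (insert k u) * (a i * (keps k (insert i u) * f (insert i u))) := by
      rw [KD_apply, Finset.compl_insert]
      refine Finset.sum_congr rfl fun i hi => ?_
      have hik : i ≠ k := Finset.ne_of_mem_erase hi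
      have hku' : k ∉ insert i u := by
        simp only [Finset.mem_insert]
        rintro (h | h)
        exacts [hik h.symm, hku h]
      rw [KH_apply, if_pos (Finset.mem_insert_of_mem (Finset.mem_insert_self k u)),
        Finset.insert_comm i k u, Finset.erase_insert hku']
    have h2 : KH k (KD a f) (insert k u) =
        keps k u * (keps k u * (a k * f (insert k u))) +
          keps k u * ∑ i ∈ uᶜ.erase k, keps i u * (a i * f (insert i u)) := by
      rw [KH_apply, if_pos (Finset.mem_insert_self k u), Finset.erase_insert hku, KD_apply,
        ← Finset.insert_erase (Finset.mem_compl.mpr hku),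
        Finset.sum_insert (Finset.notMem_erase _ _), mul_add,
        Finset.erase_insert (Finset.notMem_erase _ _)]
    rw [h1, h2]
    have hX : keps (R := R) k u * (keps k u * (a k * f (insert k u))) = a k * f (insert k u) := by
      rw [← mul_assoc, keps_mul_self, one_mul]
    have hcancel : ∑ i ∈ uᶜ.erase k,
          keps i (insert k u) * (a i * (keps k (insert i u) * f (insert i u))) +
        keps k u * ∑ i ∈ uᶜ.erase k, keps i u * (a i * f (insert i u)) = 0 := by
      rw [Finset.mul_sum, ← Finset.sum_add_distrib]
      refine Finset.sum_eq_zero fun i hi => ?_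
      have hik : i ≠ k := Finset.ne_of_mem_erase hi
      have hiu : i ∉ u := Finset.mem_compl.mp (Finset.mem_of_mem_erase hi)
      rw [keps_insert i k u hku, keps_insert k i u hiu]
      rcases hik.lt_or_gt with h | h
      · rw [if_pos h, if_neg (asymm h)]; ring
      · rw [if_neg (asymm h), if_pos h]; ring
    linear_combination hcancel + hX
  · rw [KH_apply, if_neg htk, add_zero, KD_apply]
    have hkc : k ∈ tᶜ := Finset.mem_compl.mpr htk
    rw [← Finset.insert_erase hkc, Finset.sum_insert (Finset.notMem_erase _ _)]
    have hrest : ∑ i ∈ tᶜ.erase k, keps i t * (a i * KH k f (insert i t)) = 0 := by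
      refine Finset.sum_eq_zero fun i hi => ?_
      have hik : i ≠ k := Finset.ne_of_mem_erase hi
      have : k ∉ insert i t := by
        simp only [Finset.mem_insert]
        rintro (h | h)
        exacts [hik h.symm, htk h]
      rw [KH_apply, if_neg this]
      ring
    rw [hrest, add_zero, KH_apply, if_pos (Finset.mem_insert_self k t), Finset.erase_insert htk]
    linear_combination (a k * f t) * keps_mul_self (R := R) k t

end Koszul2

section Koszul3

variable {R : Type u} [CommRing R] {n : ℕ}

def KI (n : ℕ) (j : ℤ) : Type := {s : Finset (Fin n) // (s.card : ℤ) = j}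

instance (j : ℤ) : Fintype (KI n j) :=
  Subtype.fintype _

abbrev KM (R : Type u) [CommRing R] (n : ℕ) (j : ℤ) : Type u := KI n j → R

def Kincl (j : ℤ) : KM R n j →ₗ[R] KW R n where
  toFun f := fun s => if h : (s.card : ℤ) = j then f ⟨s, h⟩ else 0
  map_add' f g := by
    funext s
    by_cases h : (s.card : ℤ) = j <;> simp [h] <;> rfl
  map_smul' r f := by
    funext s
    by_cases h : (s.card : ℤ) = j <;> simp [h] <;> rfl

def Kproj (j : ℤ) : KW R n →ₗ[R] KM R n j where
  toFun f := fun t => f t.val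
  map_add' _ _ := rfl
  map_smul' _ _ := rfl

lemma Kincl_apply (j : ℤ) (f : KM R n j) (s : Finset (Fin n)) :
    Kincl j f s = if h : (s.card : ℤ) = j then f ⟨s, h⟩ else 0 := rfl

lemma Kproj_apply (j : ℤ) (f : KW R n) (t : KI n j) : Kproj j f t = f t.val := rfl

lemma Kproj_Kincl (j : ℤ) (f : KM R n j) : Kproj j (Kincl j f) = f := by
  funext t
  rw [Kproj_apply, Kincl_apply, dif_pos t.2]
  rfl

lemma Kincl_apply_ne (j : ℤ) (f : KM R n j) (s : Finset (Fin n)) (h : (s.card : ℤ) ≠ j) :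
    Kincl j f s = 0 := dif_neg h

lemma KD_Kincl_support (a : Fin n → R) (j : ℤ) (f : KM R n j) (s : Finset (Fin n))
    (hs : (s.card : ℤ) ≠ j - 1) : KD a (Kincl j f) s = 0 := by
  rw [KD_apply]
  refine Finset.sum_eq_zero fun i hi => ?_
  have hins : ((insert i s).card : ℤ) ≠ j := by
    rw [Finset.card_insert_of_notMem (Finset.mem_compl.mp hi)]
    push_cast
    omega
  rw [Kincl_apply_ne j f _ hins]
  ring

lemma KD_Kincl_eq (a : Fin n → R) (j : ℤ) (f : KM R n j) :
    KD a (Kincl j f) = Kincl (j - 1) (Kproj (j - 1) (KD a (Kincl j f))) := by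
  funext s
  by_cases h : (s.card : ℤ) = j - 1
  · rw [Kincl_apply, dif_pos h]; rfl
  · rw [Kincl_apply, dif_neg h, KD_Kincl_support a j f s h]

lemma KH_Kincl_support (k : Fin n) (j : ℤ) (f : KM R n j) (s : Finset (Fin n))
    (hs : (s.card : ℤ) ≠ j + 1) : KH k (Kincl j f) s = 0 := by
  rw [KH_apply]
  by_cases hk : k ∈ s
  · rw [if_pos hk]
    have h1 : 1 ≤ s.card := Finset.card_pos.mpr ⟨k, hk⟩
    have herase : ((s.erase k).card : ℤ) ≠ j := by
      rw [Finset.card_erase_of_mem hk]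
      omega
    rw [Kincl_apply_ne j f _ herase]
    ring
  · rw [if_neg hk]

lemma KH_Kincl_eq (k : Fin n) (j : ℤ) (f : KM R n j) :
    KH k (Kincl j f) = Kincl (j + 1) (Kproj (j + 1) (KH k (Kincl j f))) := by
  funext s
  by_cases h : (s.card : ℤ) = j + 1
  · rw [Kincl_apply, dif_pos h]; rfl
  · rw [Kincl_apply, dif_neg h, KH_Kincl_support k j f s h]

end Koszul3

section Koszul4

variable {R : Type u} [CommRing R] {n : ℕ}

noncomputable def Kcx (a : Fin n → R) : ChainComplex (ModuleCat.{u} R) ℤ where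
  X j := ModuleCat.of R (KM R n j)
  d i j := ModuleCat.ofHom (Kproj j ∘ₗ KD a ∘ₗ Kincl i)
  shape i j h := by
    simp only [ComplexShape.down_Rel] at h
    refine ModuleCat.hom_ext (LinearMap.ext fun f => ?_)
    funext t
    exact KD_Kincl_support a i f t.val (by rw [t.2]; omega)
  d_comp_d' i j k hij hjk := by
    simp only [ComplexShape.down_Rel] at hij hjk
    refine ModuleCat.hom_ext (LinearMap.ext fun f => ?_)
    show Kproj k (KD a (Kincl j (Kproj j (KD a (Kincl i f))))) = 0
    have h2 : Kincl j (Kproj j (KD a (Kincl i f))) = KD a (Kincl i f) := by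
      have h3 := KD_Kincl_eq a i f
      have h4 : i - 1 = j := by omega
      rw [h4] at h3
      exact h3.symm
    rw [h2, KD_KD]
    exact map_zero _

end Koszul4

section Koszul5

variable {R : Type u} [CommRing R] {n : ℕ}

lemma KD_smul_mem_range (a : Fin n → R) (j : ℤ) (z : KM R n j)
    (hz : Kproj (j - 1) (KD a (Kincl j z)) = 0) {r : R}
    (hr : r ∈ Ideal.span (Set.range a)) :
    ∃ w : KM R n (j + 1), Kproj j (KD a (Kincl (j + 1) w)) = r • z := by
  have hDz : KD a (Kincl j z) = 0 := by
    funext s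
    by_cases h : (s.card : ℤ) = j - 1
    · exact congrFun hz ⟨s, h⟩
    · exact KD_Kincl_support a j z s h
  induction hr using Submodule.span_induction with
  | mem r hr =>
    obtain ⟨k, rfl⟩ := hr
    refine ⟨Kproj (j + 1) (KH k (Kincl j z)), ?_⟩
    have h1 : Kincl (j + 1) (Kproj (j + 1) (KH k (Kincl j z))) = KH k (Kincl j z) :=
      (KH_Kincl_eq k j z).symm
    rw [h1]
    have h2 : KD a (KH k (Kincl j z)) = a k • Kincl j z := by
      have := KD_KH_add_KH_KD a k (Kincl j z)
      rw [hDz, map_zero, add_zero] at this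
      exact this
    rw [h2, map_smul, Kproj_Kincl]
  | zero => exact ⟨0, by simp⟩
  | add r r' _ _ ih ih' =>
    obtain ⟨w, hw⟩ := ih
    obtain ⟨w', hw'⟩ := ih'
    exact ⟨w + w', by rw [map_add, map_add, map_add, hw, hw', add_smul]⟩
  | smul c r _ ih =>
    obtain ⟨w, hw⟩ := ih
    exact ⟨c • w, by rw [map_smul, map_smul, map_smul, hw, smul_smul, smul_eq_mul]⟩

lemma KI_isEmpty {j : ℤ} (h : j < 0 ∨ (n : ℤ) < j) : IsEmpty (KI n j) := by
  refine ⟨fun t => ?_⟩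
  have h1 := t.2
  have h2 : t.1.card ≤ n := by
    simpa using Finset.card_le_univ t.1
  omega

lemma KM_subsingleton {j : ℤ} (h : j < 0 ∨ (n : ℤ) < j) : Subsingleton (KM R n j) := by
  have := KI_isEmpty (n := n) h
  exact ⟨fun f g => funext fun t => (this.false t).elim⟩

end Koszul5

section Koszul6

open CategoryTheory

variable {R : Type u} [CommRing R] {n : ℕ}

noncomputable def Ksc (a : Fin n → R) (j : ℤ) : ShortComplex (ModuleCat.{u} R) :=
  (Kcx a).sc' (j + 1) j (j - 1)

noncomputable def KhomologyIso (a : Fin n → R) (j : ℤ) :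
    (Kcx a).homology j ≅ (Ksc a j).moduleCatLeftHomologyData.H :=
  ((Kcx a).homologyIsoSc' (j + 1) j (j - 1) (ChainComplex.prev ℤ j) (ChainComplex.next ℤ j)).trans
    (Ksc a j).moduleCatHomologyIso

lemma Ksc_g_apply (a : Fin n → R) (j : ℤ) (z : KM R n j) :
    (Ksc a j).g z = Kproj (j - 1) (KD a (Kincl j z)) := rfl

lemma Ksc_f_apply (a : Fin n → R) (j : ℤ) (w : KM R n (j + 1)) :
    (Ksc a j).f w = Kproj j (KD a (Kincl (j + 1) w)) := rfl

lemma Ksc_homology_torsion (a : Fin n → R) (j : ℤ) {r : R}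
    (hr : r ∈ Ideal.span (Set.range a)) (x : (Ksc a j).moduleCatLeftHomologyData.H) : r • x = 0 := by
  obtain ⟨z, rfl⟩ := Submodule.Quotient.mk_surjective _ x
  change r • (Submodule.Quotient.mk z : _ ⧸ LinearMap.range (Ksc a j).moduleCatToCycles) = 0
  rw [← Submodule.Quotient.mk_smul, Submodule.Quotient.mk_eq_zero]
  have hz : Kproj (j - 1) (KD a (Kincl j z.1)) = 0 := z.2
  obtain ⟨w, hw⟩ := KD_smul_mem_range a j z.1 hz hr
  exact ⟨w, Subtype.ext hw⟩

end Koszul6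

section Koszul7

open CategoryTheory

variable {R : Type u} [CommRing R] {n : ℕ}

def Ki0 : KI n 0 := ⟨∅, by simp⟩

lemma KM_neg_subsingleton : Subsingleton (KM R n (0 - 1)) :=
  KM_subsingleton (by norm_num)

noncomputable def Keker (a : Fin n → R) : ↥(LinearMap.ker (Ksc a 0).g.hom) ≃ₗ[R] R where
  toFun z := z.1 Ki0
  map_add' _ _ := rfl
  map_smul' _ _ := rfl
  invFun r := ⟨fun _ => r, by
    exact LinearMap.mem_ker.mpr
      (@Subsingleton.elim _ (KM_neg_subsingleton (R := R) (n := n)) _ _)⟩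
  left_inv z := Subtype.ext (funext fun t => by
    have ht : t = Ki0 := Subtype.ext (Finset.card_eq_zero.mp (by exact_mod_cast t.2))
    rw [ht])
  right_inv r := rfl

lemma KD_eval_empty (a : Fin n → R) (w : KM R n (0 + 1)) :
    KD a (Kincl (0 + 1) w) ∅ = ∑ i : Fin n, a i * w ⟨{i}, by simp⟩ := by
  rw [KD_apply, Finset.compl_empty]
  refine Finset.sum_congr rfl fun i _ => ?_
  have h1 : keps (R := R) i ∅ = 1 := by simp [keps]
  have h2 : insert i (∅ : Finset (Fin n)) = {i} := rfl
  rw [h1, one_mul, h2, Kincl_apply, dif_pos (by simp)]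

lemma Keker_map_range (a : Fin n → R) :
    (LinearMap.range (Ksc a 0).moduleCatToCycles).map ((Keker a) : _ →ₗ[R] R) =
      Ideal.span (Set.range a) := by
  rw [← LinearMap.range_comp]
  apply le_antisymm
  · rintro r ⟨w, rfl⟩
    have : ((Keker a).toLinearMap ∘ₗ (Ksc a 0).moduleCatToCycles) w =
        ∑ i : Fin n, a i * w ⟨{i}, by simp⟩ := KD_eval_empty a w
    rw [this]
    exact Ideal.sum_mem _ fun i _ =>
      Ideal.mul_mem_right _ _ (Ideal.subset_span ⟨i, rfl⟩)
  · rw [Ideal.span_le]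
    rintro _ ⟨i, rfl⟩
    refine ⟨(fun t => if t.1 = {i} then (1 : R) else 0 : KM R n (0 + 1)), ?_⟩
    have : ((Keker a).toLinearMap ∘ₗ (Ksc a 0).moduleCatToCycles)
        (fun t => if t.1 = {i} then (1 : R) else 0) =
        ∑ i' : Fin n, a i' * (if ({i'} : Finset (Fin n)) = {i} then (1 : R) else 0) :=
      KD_eval_empty a _
    rw [this]
    have h3 : ∀ i' : Fin n, a i' * (if ({i'} : Finset (Fin n)) = {i} then (1 : R) else 0) =
        if i' = i then a i' else 0 := by
      intro i'
      by_cases h : i' = i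
      · simp [h]
      · rw [if_neg (by simpa using h), if_neg h, mul_zero]
    rw [Finset.sum_congr rfl fun i' _ => h3 i', Finset.sum_ite_eq' Finset.univ i fun i' => a i',
      if_pos (Finset.mem_univ i)]

noncomputable def KH0equiv (a : Fin n → R) :
    ((Ksc a 0).moduleCatLeftHomologyData.H : Type u) ≃ₗ[R] (R ⧸ Ideal.span (Set.range a)) :=
  Submodule.Quotient.equiv _ _ (Keker a) (Keker_map_range a)

end Koszul7

section Pred

variable (R : Type u) [CommRing R] [IsNoetherianRing R]
    (P : ∀ (M : Type u) [AddCommGroup M] [Module R M], Prop)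

set_option linter.unusedSectionVars false in
lemma P_subsingleton
    (hiso : ∀ (M N : Type u) [AddCommGroup M] [Module R M] [AddCommGroup N] [Module R N]
      [Module.Finite R M] [Module.Finite R N], (M ≃ₗ[R] N) → P M → P N)
    (hcoker : ∀ (M N : Type u) [AddCommGroup M] [Module R M] [AddCommGroup N] [Module R N]
      [Module.Finite R M] [Module.Finite R N] (f : M →ₗ[R] N),
      P M → P N → P (N ⧸ LinearMap.range f))
    (W : Type u) [AddCommGroup W] [Module R W] [Module.Finite R W] (hW : P W)
    (Z : Type u) [AddCommGroup Z] [Module R Z] [Module.Finite R Z] [Subsingleton Z] : P Z := by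
  have h1 : P (W ⧸ LinearMap.range (LinearMap.id (R := R) (M := W))) :=
    hcoker W W LinearMap.id hW hW
  haveI h2 : Subsingleton (W ⧸ LinearMap.range (LinearMap.id (R := R) (M := W))) := by
    rw [LinearMap.range_id]
    exact Submodule.Quotient.subsingleton_iff.mpr rfl
  exact hiso _ _ (LinearEquiv.ofSubsingleton _ _) h1

lemma P_pi
    (hiso : ∀ (M N : Type u) [AddCommGroup M] [Module R M] [AddCommGroup N] [Module R N]
      [Module.Finite R M] [Module.Finite R N], (M ≃ₗ[R] N) → P M → P N)
    (hsum : ∀ (M N : Type u) [AddCommGroup M] [Module R M] [AddCommGroup N] [Module R N]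
      [Module.Finite R M] [Module.Finite R N], P M → P N → P (M × N))
    (hcoker : ∀ (M N : Type u) [AddCommGroup M] [Module R M] [AddCommGroup N] [Module R N]
      [Module.Finite R M] [Module.Finite R N] (f : M →ₗ[R] N),
      P M → P N → P (N ⧸ LinearMap.range f))
    (I : Ideal R) (hPI : P (R ⧸ I)) : ∀ m : ℕ, P (Fin m → R ⧸ I) := by
  intro m
  induction m with
  | zero =>
    haveI : Subsingleton (Fin 0 → R ⧸ I) := ⟨fun f g => funext fun i => i.elim0⟩
    exact P_subsingleton R P hiso hcoker (R ⧸ I) hPI _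
  | succ m ih =>
    have e : ((R ⧸ I) × (Fin m → R ⧸ I)) ≃ₗ[R] (Fin (m + 1) → R ⧸ I) :=
      { toFun := fun p => Fin.cons p.1 p.2
        invFun := fun f => (f 0, fun i => f i.succ)
        map_add' := fun p q => by
          funext i
          refine Fin.cases ?_ (fun i => ?_) i <;> simp
        map_smul' := fun r p => by
          funext i
          refine Fin.cases ?_ (fun i => ?_) i <;> simp
        left_inv := fun p => by simp
        right_inv := fun f => Fin.cons_self_tail f }
    exact hiso _ _ e (hsum _ _ hPI ih)

lemma P_of_torsion
    (hiso : ∀ (M N : Type u) [AddCommGroup M] [Module R M] [AddCommGroup N] [Module R N]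
      [Module.Finite R M] [Module.Finite R N], (M ≃ₗ[R] N) → P M → P N)
    (hsum : ∀ (M N : Type u) [AddCommGroup M] [Module R M] [AddCommGroup N] [Module R N]
      [Module.Finite R M] [Module.Finite R N], P M → P N → P (M × N))
    (hcoker : ∀ (M N : Type u) [AddCommGroup M] [Module R M] [AddCommGroup N] [Module R N]
      [Module.Finite R M] [Module.Finite R N] (f : M →ₗ[R] N),
      P M → P N → P (N ⧸ LinearMap.range f))
    (I : Ideal R) (hPI : P (R ⧸ I))
    (N : Type u) [AddCommGroup N] [Module R N] [Module.Finite R N]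
    (htors : ∀ r ∈ I, ∀ x : N, r • x = 0) : P N := by
  classical
  obtain ⟨m, y, hy⟩ := Module.Finite.exists_fin (R := R) (M := N)
  have hIle : ∀ i : Fin m, I ≤ LinearMap.ker (LinearMap.toSpanSingleton R N (y i)) := by
    intro i r hr
    exact LinearMap.mem_ker.mpr (htors r hr (y i))
  set φ : (Fin m → R ⧸ I) →ₗ[R] N :=
    ∑ i : Fin m, (I.liftQ (LinearMap.toSpanSingleton R N (y i)) (hIle i)).comp
      (LinearMap.proj i) with hφ
  have hφ_apply : ∀ (c : Fin m → R), φ (fun i => Submodule.Quotient.mk (c i)) =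
      ∑ i, c i • y i := by
    intro c
    rw [hφ, LinearMap.sum_apply]
    refine Finset.sum_congr rfl fun i _ => ?_
    rw [LinearMap.comp_apply]
    have : (fun i => Submodule.Quotient.mk (p := I) (c i)) i = Submodule.Quotient.mk (c i) := rfl
    rw [show (LinearMap.proj (R := R) i) (fun i => Submodule.Quotient.mk (p := I) (c i)) =
      Submodule.Quotient.mk (c i) from rfl, Submodule.liftQ_apply,
      LinearMap.toSpanSingleton_apply]
  have hφsurj : Function.Surjective φ := by
    intro x
    have hx : x ∈ Submodule.span R (Set.range y) := hy ▸ Submodule.mem_top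
    rw [Submodule.mem_span_range_iff_exists_fun] at hx
    obtain ⟨c, hc⟩ := hx
    exact ⟨fun i => Submodule.Quotient.mk (c i), by rw [hφ_apply]; exact hc⟩
  haveI : IsNoetherian R (R ⧸ I) := isNoetherian_quotient _
  have hK : (LinearMap.ker φ).FG := IsNoetherian.noetherian _
  obtain ⟨k, c, hc⟩ := Submodule.fg_iff_exists_fin_generating_family.mp hK
  set ψ' := Fintype.linearCombination (R ⧸ I) c with hψ'
  set ψ : (Fin k → R ⧸ I) →ₗ[R] (Fin m → R ⧸ I) := ψ'.restrictScalars R with hψ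
  have halg : Function.Surjective (algebraMap R (R ⧸ I)) := by
    rw [Ideal.Quotient.algebraMap_eq]
    exact Ideal.Quotient.mk_surjective
  have hrange : LinearMap.range ψ = LinearMap.ker φ := by
    have h1 : LinearMap.range ψ = Submodule.restrictScalars R (LinearMap.range ψ') := by
      ext x
      exact Iff.rfl
    rw [h1, hψ', Fintype.range_linearCombination,
      Submodule.restrictScalars_span R (R ⧸ I) halg, hc]
  have e1 : ((Fin m → R ⧸ I) ⧸ LinearMap.range ψ) ≃ₗ[R] N := by
    rw [hrange]
    exact φ.quotKerEquivOfSurjective hφsurj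
  exact hiso _ N e1 (hcoker _ _ ψ (P_pi R P hiso hsum hcoker I hPI k)
    (P_pi R P hiso hsum hcoker I hPI m))

end Pred

/-- Let `R` be commutative noetherian and `P` an isomorphism-invariant predicate on
finitely generated modules closed under finite direct sums and cokernels. For every
cyclic module `M` with `P M` there is a bounded chain complex `X` of finitely generated
free `R`-modules whose zeroth homology is isomorphic to `M` and all of whose homologies
satisfy `P`. -/
theorem exists_perfect_complex_of_cyclic
    (R : Type u) [CommRing R] [IsNoetherianRing R]
    (P : ∀ (M : Type u) [AddCommGroup M] [Module R M], Prop)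
    (hiso : ∀ (M N : Type u) [AddCommGroup M] [Module R M] [AddCommGroup N] [Module R N]
      [Module.Finite R M] [Module.Finite R N], (M ≃ₗ[R] N) → P M → P N)
    (hsum : ∀ (M N : Type u) [AddCommGroup M] [Module R M] [AddCommGroup N] [Module R N]
      [Module.Finite R M] [Module.Finite R N], P M → P N → P (M × N))
    (hcoker : ∀ (M N : Type u) [AddCommGroup M] [Module R M] [AddCommGroup N] [Module R N]
      [Module.Finite R M] [Module.Finite R N] (f : M →ₗ[R] N),
      P M → P N → P (N ⧸ LinearMap.range f))
    (M : Type u) [AddCommGroup M] [Module R M]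
    (hcyc : ∃ x : M, Submodule.span R {x} = ⊤)
    (hM : P M) :
    ∃ X : ChainComplex (ModuleCat.{u} R) ℤ,
      (∀ j : ℤ, Module.Free R (X.X j) ∧ Module.Finite R (X.X j)) ∧
      (∃ s : Finset ℤ, ∀ j ∉ s, Subsingleton (X.X j)) ∧
      (Nonempty ((X.homology 0 : Type u) ≃ₗ[R] M)) ∧
      (∀ j : ℤ, P (X.homology j)) := by
  classical
  obtain ⟨x, hx⟩ := hcyc
  haveI hMfin : Module.Finite R M := ⟨⟨{x}, by simpa using hx⟩⟩
  set l := LinearMap.toSpanSingleton R M x with hl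
  have hlsurj : Function.Surjective l := by
    rw [← LinearMap.range_eq_top, ← LinearMap.span_singleton_eq_range]
    exact hx
  set I := LinearMap.ker l with hI
  have eRM : (R ⧸ I) ≃ₗ[R] M := l.quotKerEquivOfSurjective hlsurj
  haveI : IsNoetherian R R := by rwa [← isNoetherianRing_iff]
  have hIfg : I.FG := IsNoetherian.noetherian I
  obtain ⟨n, a, ha⟩ := Submodule.fg_iff_exists_fin_generating_family.mp hIfg
  have ha2 : Ideal.span (Set.range a) = I := ha
  have hPI : P (R ⧸ I) := hiso M (R ⧸ I) eRM.symm hM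
  refine ⟨Kcx a, fun j => ⟨inferInstanceAs (Module.Free R (KM R n j)),
    inferInstanceAs (Module.Finite R (KM R n j))⟩, ?_, ?_, ?_⟩
  · refine ⟨Finset.Icc 0 (n : ℤ), fun j hj => ?_⟩
    have hj2 : j < 0 ∨ (n : ℤ) < j := by
      simp only [Finset.mem_Icc, not_and, not_le] at hj
      omega
    exact KM_subsingleton hj2
  · refine ⟨?_⟩
    have e1 := (KhomologyIso a 0).toLinearEquiv
    have e2 := KH0equiv a
    rw [ha2] at e2
    exact (e1.trans e2).trans eRM
  · intro j
    have e1 := (KhomologyIso a j).toLinearEquiv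
    haveI : Module.Finite R ↥(LinearMap.ker (Ksc a j).g.hom) := by
      haveI : IsNoetherian R ((Ksc a j).X₂ : Type u) := inferInstanceAs (IsNoetherian R (KM R n j))
      exact Module.Finite.iff_fg.mpr (IsNoetherian.noetherian _)
    haveI : Module.Finite R ((Ksc a j).moduleCatLeftHomologyData.H : Type u) :=
      inferInstanceAs (Module.Finite R
        (↥(LinearMap.ker (Ksc a j).g.hom) ⧸ LinearMap.range (Ksc a j).moduleCatToCycles))
    have htors : ∀ r ∈ I, ∀ z : ((Ksc a j).moduleCatLeftHomologyData.H : Type u), r • z = 0 := by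
      intro r hr z
      rw [← ha2] at hr
      exact Ksc_homology_torsion a j hr z
    have hP : P ((Ksc a j).moduleCatLeftHomologyData.H : Type u) :=
      P_of_torsion R P hiso hsum hcoker I hPI _ htors
    haveI : Module.Finite R ((Kcx a).homology j) := Module.Finite.equiv e1.symm
    exact hiso _ _ e1.symm hP
end
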